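/- arXiv:1501.03444 — 7 statements merged into one kernel-verified Lean document; each statement's English description precedes it below -/
import Mathlib

section
/- Let n ≥ 1, 1 ≤ d ≤ n, and 1 ≤ k ≤ 2^n − 2^{n−d}. The fraction of functions f in P_k^n that possess at least one implicant of rank d is at most 2^d · C(n, d) · (1 − 2^{−d})^k. -/
open scoped Classical

/-- A conjunction (term) over `n` Boolean variables: a support set `supp ⊆ Fin n`
together with a sign assignment `sgn` (only its values on `supp` matter). -/
structure Conj (n : ℕ) where
  supp : Finset (Fin n)
  sgn : Fin n → Bool

/-- The rank of a conjunction: the number of literals, i.e. `|supp|`. -/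
def Conj.rank {n : ℕ} (K : Conj n) : ℕ := K.supp.card

/-- A conjunction covers a point `x` if `x` agrees with the sign assignment on the support. -/
def Conj.covers {n : ℕ} (K : Conj n) (x : Fin n → Bool) : Prop :=
  ∀ i ∈ K.supp, x i = K.sgn i

/-- `K` is an implicant of `f` if every point covered by `K` is a one of `f`. -/
def Implicant {n : ℕ} (K : Conj n) (f : (Fin n → Bool) → Bool) : Prop :=
  ∀ x, K.covers x → f x = true

/-- `K` is a prime implicant of `f` if it is an implicant of `f` and deleting
any coordinate of its support yields a conjunction which is not an implicant of `f`. -/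
def PrimeImplicant {n : ℕ} (K : Conj n) (f : (Fin n → Bool) → Bool) : Prop :=
  Implicant K f ∧ ∀ i ∈ K.supp, ¬ Implicant ⟨K.supp.erase i, K.sgn⟩ f

/-- The number of zeros of a Boolean function on `n` variables. -/
def zerosCard {n : ℕ} (f : (Fin n → Bool) → Bool) : ℕ :=
  (Finset.univ.filter (fun x => f x = false)).card

/-- `P_k^n`: the (finite) class of Boolean functions on `n` variables with exactly `k` zeros. -/
def Pclass (n k : ℕ) : Finset ((Fin n → Bool) → Bool) :=
  Finset.univ.filter (fun f => zerosCard f = k)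

/-- `D` is a DNF realization of `f`: `f x = true` iff some conjunction of `D` covers `x`. -/
def IsDNF {n : ℕ} (f : (Fin n → Bool) → Bool) (D : Finset (Conj n)) : Prop :=
  ∀ x, f x = true ↔ ∃ K ∈ D, K.covers x

/-- The fraction of functions in `P_k^n` satisfying property `P`. -/
noncomputable def frac (n k : ℕ) (P : ((Fin n → Bool) → Bool) → Prop) : ℝ :=
  (((Pclass n k).filter P).card : ℝ) / ((Pclass n k).card : ℝ)


lemma descFact_mul_pow_le (k A M : ℕ) (h : A ≤ M) :
    A.descFactorial k * M ^ k ≤ M.descFactorial k * A ^ k := by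
  induction k with
  | zero => simp
  | succ k ih =>
    rw [Nat.descFactorial_succ, Nat.descFactorial_succ, pow_succ, pow_succ]
    calc (A - k) * A.descFactorial k * (M ^ k * M)
        = ((A - k) * M) * (A.descFactorial k * M ^ k) := by ring
      _ ≤ ((M - k) * A) * (M.descFactorial k * A ^ k) := by
          refine Nat.mul_le_mul ?_ ih
          calc (A - k) * M = A * M - k * M := by rw [Nat.sub_mul]
            _ ≤ M * A - k * A := by
                rw [Nat.mul_comm A M]
                exact Nat.sub_le_sub_left (Nat.mul_le_mul_left k h) _
            _ = (M - k) * A := by rw [Nat.sub_mul]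
      _ = (M - k) * M.descFactorial k * (A ^ k * A) := by ring

lemma choose_mul_pow_le (k A M : ℕ) (h : A ≤ M) :
    A.choose k * M ^ k ≤ M.choose k * A ^ k := by
  have h2 := descFact_mul_pow_le k A M h
  rw [Nat.descFactorial_eq_factorial_mul_choose, Nat.descFactorial_eq_factorial_mul_choose] at h2
  have hfac : 0 < Nat.factorial k := Nat.factorial_pos k
  rw [mul_assoc, mul_assoc] at h2
  exact Nat.le_of_mul_le_mul_left h2 hfac

lemma cov_card {n : ℕ} (s : Finset (Fin n)) (σ : Fin n → Bool) :
    (Finset.univ.filter (fun x : Fin n → Bool => ∀ i ∈ s, x i = σ i)).card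
      = 2 ^ (n - s.card) := by
  have e : {x : Fin n → Bool // ∀ i ∈ s, x i = σ i} ≃ ((sᶜ : Finset (Fin n)) → Bool) :=
    { toFun := fun x j => x.1 j.1
      invFun := fun y => ⟨fun i => if h : i ∈ s then σ i else y ⟨i, Finset.mem_compl.mpr h⟩,
        fun i hi => dif_pos hi⟩
      left_inv := by
        rintro ⟨x, hx⟩
        ext i
        by_cases h : i ∈ s
        · simp [h, hx i h]
        · simp [h]
      right_inv := by
        intro y
        funext j
        have hj : (j : Fin n) ∉ s := Finset.mem_compl.mp j.2
        simp [hj] }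
  have h1 : (Finset.univ.filter (fun x : Fin n → Bool => ∀ i ∈ s, x i = σ i)).card
      = Fintype.card {x : Fin n → Bool // ∀ i ∈ s, x i = σ i} := by
    rw [Fintype.card_subtype]
  rw [h1, Fintype.card_congr e]
  simp [Finset.card_compl]

lemma zset_injOn {n : ℕ} {S : Finset ((Fin n → Bool) → Bool)} :
    Set.InjOn (fun f : (Fin n → Bool) → Bool =>
      Finset.univ.filter (fun x => f x = false)) S := by
  intro f _ g _ h
  simp only at h
  funext x
  have hx : (f x = false) ↔ (g x = false) := by
    constructor <;> intro hh
    · have : x ∈ Finset.univ.filter (fun x => g x = false) := by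
        rw [← h]; simp [hh]
      simpa using this
    · have : x ∈ Finset.univ.filter (fun x => f x = false) := by
        rw [h]; simp [hh]
      simpa using this
  cases hf : f x <;> cases hg : g x <;> simp_all

lemma Pclass_card_ge (n k : ℕ) :
    (2 ^ n).choose k ≤ (Pclass n k).card := by
  classical
  have := Finset.card_le_card_of_injOn
    (f := fun Z : Finset (Fin n → Bool) => (fun x => decide (x ∉ Z)))
    (s := (Finset.univ : Finset (Fin n → Bool)).powersetCard k)
    (t := Pclass n k) ?_ ?_
  · calc (2 ^ n).choose k
        = ((Finset.univ : Finset (Fin n → Bool)).powersetCard k).card := by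
          rw [Finset.card_powersetCard]
          simp
      _ ≤ (Pclass n k).card := this
  · intro Z hZ
    rw [Finset.mem_coe, Finset.mem_powersetCard] at hZ
    simp only [Finset.mem_coe, Pclass, Finset.mem_filter, Finset.mem_univ, true_and]
    unfold zerosCard
    have : (Finset.univ.filter (fun x => decide (x ∉ Z) = false)) = Z := by
      ext x
      simp
    rw [this, hZ.2]
  · intro Z _ W _ h
    ext x
    have := congrFun h x
    simpa using this

lemma count_implicant {n d k : ℕ} (s : Finset (Fin n)) (σ : Fin n → Bool)
    (hs : s.card = d) :
    ((Pclass n k).filter (fun f => Implicant ⟨s, σ⟩ f)).card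
      ≤ (2 ^ n - 2 ^ (n - d)).choose k := by
  classical
  set C : Finset (Fin n → Bool) :=
    Finset.univ.filter (fun x => ∀ i ∈ s, x i = σ i) with hCdef
  have hC : C.card = 2 ^ (n - d) := by rw [hCdef, cov_card, hs]
  have hCc : Cᶜ.card = 2 ^ n - 2 ^ (n - d) := by
    rw [Finset.card_compl, hC]
    congr 1
    simp
  have key : ((Pclass n k).filter (fun f => Implicant ⟨s, σ⟩ f)).card
      ≤ (Cᶜ.powersetCard k).card := by
    apply Finset.card_le_card_of_injOn
      (fun f => Finset.univ.filter (fun x => f x = false))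
    · intro f hf
      simp only [Finset.mem_coe, Finset.mem_filter] at hf
      obtain ⟨hfP, himp⟩ := hf
      rw [Finset.mem_coe, Finset.mem_powersetCard]
      constructor
      · intro x hx
        rw [Finset.mem_compl]
        intro hxC
        rw [hCdef, Finset.mem_filter] at hxC
        have hft := himp x hxC.2
        simp only [Finset.mem_filter] at hx
        rw [hx.2] at hft
        exact Bool.false_ne_true hft
      · have : zerosCard f = k := by
          simpa [Pclass] using hfP
        exact this
    · exact zset_injOn
  calc ((Pclass n k).filter (fun f => Implicant ⟨s, σ⟩ f)).card
      ≤ (Cᶜ.powersetCard k).card := key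
    _ = (2 ^ n - 2 ^ (n - d)).choose k := by
        rw [Finset.card_powersetCard, hCc]
  rfl

/-- The fraction of functions in `P_k^n` possessing at least one implicant of
rank `d` is at most `2^d · C(n, d) · (1 − 2^(−d))^k`. -/
theorem stmt1 (n d k : ℕ) (hn : 1 ≤ n) (hd1 : 1 ≤ d) (hdn : d ≤ n)
    (hk1 : 1 ≤ k) (hk2 : k ≤ 2 ^ n - 2 ^ (n - d)) :
    frac n k (fun f => ∃ K : Conj n, K.rank = d ∧ Implicant K f) ≤
      (2 : ℝ) ^ d * (Nat.choose n d : ℝ) * (1 - 1 / 2 ^ d : ℝ) ^ k := by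
  classical
  set I : Finset ((_ : Finset (Fin n)) × Finset (Fin n)) :=
    (Finset.univ.powersetCard d).sigma (fun s => s.powerset) with hIdef
  unfold frac
  set F := (Pclass n k).filter (fun f => ∃ K : Conj n, K.rank = d ∧ Implicant K f) with hF
  have hsub : F ⊆ I.biUnion (fun p =>
      (Pclass n k).filter (fun f => Implicant ⟨p.1, fun i => decide (i ∈ p.2)⟩ f)) := by
    intro f hf
    rw [hF, Finset.mem_filter] at hf
    obtain ⟨hfP, K, hrank, himp⟩ := hf
    rw [Finset.mem_biUnion]
    refine ⟨⟨K.supp, K.supp.filter (fun i => K.sgn i = true)⟩, ?_, ?_⟩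
    · rw [hIdef, Finset.mem_sigma]
      constructor
      · rw [Finset.mem_powersetCard]
        exact ⟨Finset.subset_univ _, hrank⟩
      · exact Finset.mem_powerset.mpr (Finset.filter_subset _ _)
    · rw [Finset.mem_filter]
      refine ⟨hfP, ?_⟩
      intro x hx
      apply himp x
      intro i hi
      have hxi := hx i hi
      rw [hxi]
      cases hsgn : K.sgn i <;> simp [Finset.mem_filter, hi, hsgn]
  have hcard : F.card ≤ (n.choose d * 2 ^ d) * ((2 ^ n - 2 ^ (n - d)).choose k) := by
    calc F.card ≤ (I.biUnion (fun p =>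
        (Pclass n k).filter (fun f => Implicant ⟨p.1, fun i => decide (i ∈ p.2)⟩ f))).card :=
          Finset.card_le_card hsub
      _ ≤ ∑ p ∈ I, ((Pclass n k).filter
            (fun f => Implicant ⟨p.1, fun i => decide (i ∈ p.2)⟩ f)).card :=
          Finset.card_biUnion_le
      _ ≤ ∑ _p ∈ I, (2 ^ n - 2 ^ (n - d)).choose k := by
          apply Finset.sum_le_sum
          intro p hp
          apply count_implicant
          rw [hIdef, Finset.mem_sigma, Finset.mem_powersetCard] at hp
          exact hp.1.2
      _ = I.card * ((2 ^ n - 2 ^ (n - d)).choose k) := by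
          rw [Finset.sum_const, smul_eq_mul]
      _ = (n.choose d * 2 ^ d) * ((2 ^ n - 2 ^ (n - d)).choose k) := by
          congr 1
          rw [hIdef, Finset.card_sigma]
          have hps : ∀ s ∈ (Finset.univ : Finset (Fin n)).powersetCard d,
              (s.powerset).card = 2 ^ d := by
            intro s hs
            rw [Finset.card_powerset, (Finset.mem_powersetCard.mp hs).2]
          rw [Finset.sum_congr rfl hps, Finset.sum_const, smul_eq_mul,
              Finset.card_powersetCard]
          simp
    exact le_rfl
  have hmM : 2 ^ (n - d) ≤ 2 ^ n := Nat.pow_le_pow_right (by norm_num) (Nat.sub_le n d)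
  have hkM : k ≤ 2 ^ n := le_trans hk2 (Nat.sub_le _ _)
  have hBpos : 0 < (2 ^ n).choose k := Nat.choose_pos hkM
  have hPpos : 0 < (Pclass n k).card := lt_of_lt_of_le hBpos (Pclass_card_ge n k)
  have hBposR : (0 : ℝ) < ((2 ^ n).choose k : ℝ) := by exact_mod_cast hBpos
  have hMposR : (0 : ℝ) < ((2 : ℝ) ^ n) := by positivity
  have hchoose := choose_mul_pow_le k (2 ^ n - 2 ^ (n - d)) (2 ^ n) (Nat.sub_le _ _)
  have hfrac_eq : ((2 ^ n - 2 ^ (n - d) : ℕ) : ℝ) / ((2 : ℝ) ^ n) = 1 - 1 / 2 ^ d := by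
    have h2 : ((2 : ℝ) ^ n) = 2 ^ (n - d) * 2 ^ d := by
      rw [← pow_add]
      congr 1
      omega
    rw [Nat.cast_sub hmM]
    push_cast
    rw [h2]
    have hne : (2 : ℝ) ^ (n - d) ≠ 0 := by positivity
    have hne2 : (2 : ℝ) ^ d ≠ 0 := by positivity
    field_simp
  have hratio : (((2 ^ n - 2 ^ (n - d)).choose k : ℕ) : ℝ) / (((2 ^ n).choose k : ℕ) : ℝ)
      ≤ (1 - 1 / 2 ^ d : ℝ) ^ k := by
    rw [← hfrac_eq, div_pow, div_le_div_iff₀ hBposR (by positivity)]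
    have := hchoose
    have hcast : (((2 ^ n - 2 ^ (n - d)).choose k : ℕ) : ℝ) * ((2 : ℝ) ^ n) ^ k
        ≤ (((2 ^ n).choose k : ℕ) : ℝ) * (((2 ^ n - 2 ^ (n - d) : ℕ) : ℝ)) ^ k := by
      exact_mod_cast hchoose
    calc (((2 ^ n - 2 ^ (n - d)).choose k : ℕ) : ℝ) * ((2 : ℝ) ^ n) ^ k
        ≤ (((2 ^ n).choose k : ℕ) : ℝ) * (((2 ^ n - 2 ^ (n - d) : ℕ) : ℝ)) ^ k := hcast
      _ = (((2 ^ n - 2 ^ (n - d) : ℕ) : ℝ)) ^ k * (((2 ^ n).choose k : ℕ) : ℝ) := by ring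
  have h1 : (F.card : ℝ) ≤ ((n.choose d * 2 ^ d : ℕ) : ℝ) *
      (((2 ^ n - 2 ^ (n - d)).choose k : ℕ) : ℝ) := by
    exact_mod_cast hcard
  have hPR : ((2 ^ n).choose k : ℝ) ≤ ((Pclass n k).card : ℝ) := by
    exact_mod_cast Pclass_card_ge n k
  have hnn : (0 : ℝ) ≤ ((n.choose d * 2 ^ d : ℕ) : ℝ) *
      (((2 ^ n - 2 ^ (n - d)).choose k : ℕ) : ℝ) := by positivity
  calc (F.card : ℝ) / ((Pclass n k).card : ℝ)
      ≤ (((n.choose d * 2 ^ d : ℕ) : ℝ) * (((2 ^ n - 2 ^ (n - d)).choose k : ℕ) : ℝ))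
          / (((2 ^ n).choose k : ℕ) : ℝ) :=
        div_le_div₀ hnn h1 hBposR hPR
    _ = ((n.choose d * 2 ^ d : ℕ) : ℝ) *
          ((((2 ^ n - 2 ^ (n - d)).choose k : ℕ) : ℝ) / (((2 ^ n).choose k : ℕ) : ℝ)) := by
        ring
    _ ≤ ((n.choose d * 2 ^ d : ℕ) : ℝ) * (1 - 1 / 2 ^ d : ℝ) ^ k := by
        apply mul_le_mul_of_nonneg_left hratio (by positivity)
    _ = (2 : ℝ) ^ d * (Nat.choose n d : ℝ) * (1 - 1 / 2 ^ d : ℝ) ^ k := by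
        push_cast
        ring
end

section
/- Let n ≥ 1, 1 ≤ d ≤ n, and k ≥ 1 with k ≤ 2^n − 2^{n−d}. The fraction of functions f in P_k^n that possess at least one prime implicant of rank d is at most 2^d · C(n, d) · (k / 2^{d−1})^d. -/
open scoped Classical

namespace Aux
variable {n : ℕ}

noncomputable def pick (T : Finset (Fin n → Bool)) : Fin n → Bool :=
  if h : T.Nonempty then h.choose else (fun _ => false)

lemma pick_mem {T : Finset (Fin n → Bool)} (h : T.Nonempty) : pick T ∈ T := by
  rw [pick, dif_pos h]; exact h.choose_spec

def ZS (f : (Fin n → Bool) → Bool) : Finset (Fin n → Bool) :=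
  Finset.univ.filter (fun x => f x = false)

lemma eq_of_ZS_eq {f g : (Fin n → Bool) → Bool} (h : ZS f = ZS g) : f = g := by
  funext x
  have hx : f x = false ↔ g x = false := by
    constructor <;> intro hh
    · have hm : x ∈ ZS f := by simp [ZS, hh]
      rw [h] at hm; simpa [ZS] using hm
    · have hm : x ∈ ZS g := by simp [ZS, hh]
      rw [← h] at hm; simpa [ZS] using hm
  cases hf : f x <;> cases hg : g x <;> simp_all

lemma cube_card (S : Finset (Fin n)) (τ : Fin n → Bool) :
    (Finset.univ.filter (fun x : Fin n → Bool => ∀ i ∈ S, x i = τ i)).card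
      = 2 ^ (n - S.card) := by
  have he : (Finset.univ.filter (fun x : Fin n → Bool => ∀ i ∈ S, x i = τ i))
      = Fintype.piFinset (fun i => if i ∈ S then ({τ i} : Finset Bool) else Finset.univ) := by
    ext x
    simp only [Finset.mem_filter, Finset.mem_univ, true_and, Fintype.mem_piFinset]
    constructor
    · intro hx i
      by_cases hi : i ∈ S
      · simp [hi, hx i hi]
      · simp [hi]
    · intro hx i hi
      have := hx i
      simpa [hi] using this
  rw [he, Fintype.card_piFinset]
  have : ∀ i : Fin n, ((if i ∈ S then ({τ i} : Finset Bool) else Finset.univ)).card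
      = if i ∈ S then 1 else 2 := by
    intro i; by_cases hi : i ∈ S <;> simp [hi]
  simp only [this]
  rw [Finset.prod_ite, Finset.prod_const, Finset.prod_const]
  have h1 : (Finset.univ.filter (fun i : Fin n => i ∈ S)) = S := by
    ext i; simp
  have h2 : (Finset.univ.filter (fun i : Fin n => ¬ i ∈ S)) = Sᶜ := by
    ext i; simp
  rw [h1, h2, one_pow, one_mul, Finset.card_compl, Fintype.card_fin]

/-- The side-cube at coordinate `i`. -/
def Side (K : Conj n) (i : Fin n) : Finset (Fin n → Bool) :=
  Finset.univ.filter (fun x => x i = !K.sgn i ∧ ∀ j ∈ K.supp, j ≠ i → x j = K.sgn j)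

lemma Side_card (K : Conj n) {i : Fin n} (hi : i ∈ K.supp) :
    (Side K i).card = 2 ^ (n - K.supp.card) := by
  have he : Side K i = Finset.univ.filter
      (fun x : Fin n → Bool => ∀ j ∈ K.supp,
        x j = (fun j => if j = i then !K.sgn i else K.sgn j) j) := by
    ext x
    simp only [Side, Finset.mem_filter, Finset.mem_univ, true_and]
    constructor
    · rintro ⟨h1, h2⟩ j hj
      by_cases hji : j = i
      · subst hji; simpa using h1
      · simpa [hji] using h2 j hj hji
    · intro h
      refine ⟨by simpa using h i hi, fun j hj hji => by simpa [hji] using h j hj⟩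
  rw [he, cube_card]

lemma PI_side_nonempty {K : Conj n} {f : (Fin n → Bool) → Bool}
    (hPI : PrimeImplicant K f) {i : Fin n} (hi : i ∈ K.supp) :
    (ZS f ∩ Side K i).Nonempty := by
  have h := hPI.2 i hi
  rw [Implicant] at h
  push_neg at h
  obtain ⟨x, hcov, hfx⟩ := h
  have hfx' : f x = false := by cases hfx2 : f x; rfl; exact absurd hfx2 hfx
  have hagree : ∀ j ∈ K.supp, j ≠ i → x j = K.sgn j := by
    intro j hj hji
    exact hcov j (Finset.mem_erase.2 ⟨hji, hj⟩)
  have hxi : x i = !K.sgn i := by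
    by_contra hne
    have : x i = K.sgn i := by
      cases hxv : x i <;> cases hsv : K.sgn i <;> simp_all
    have hcovK : K.covers x := by
      intro j hj
      by_cases hji : j = i
      · subst hji; exact this
      · exact hagree j hj hji
    exact hfx (hPI.1 x hcovK)
  refine ⟨x, ?_⟩
  simp only [Finset.mem_inter, ZS, Side, Finset.mem_filter, Finset.mem_univ, true_and]
  exact ⟨hfx', hxi, hagree⟩

lemma PI_witness_image {K : Conj n} {f : (Fin n → Bool) → Bool}
    (hPI : PrimeImplicant K f) :
    (K.supp.image (fun i => if i ∈ K.supp then pick (ZS f ∩ Side K i) else (fun _ => false)))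
      ⊆ ZS f ∧
    (K.supp.image (fun i => if i ∈ K.supp then pick (ZS f ∩ Side K i) else (fun _ => false))).card
      = K.supp.card := by
  set wit : Fin n → (Fin n → Bool) :=
    fun i => if i ∈ K.supp then pick (ZS f ∩ Side K i) else (fun _ => false) with hwit
  have hmem : ∀ i ∈ K.supp, wit i ∈ ZS f ∩ Side K i := by
    intro i hi
    simp only [hwit, if_pos hi]
    exact pick_mem (PI_side_nonempty hPI hi)
  constructor
  · intro x hx
    obtain ⟨i, hi, rfl⟩ := Finset.mem_image.1 hx
    exact (Finset.mem_inter.1 (hmem i hi)).1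
  · apply Finset.card_image_of_injOn
    intro i hi j hj hij
    by_contra hne
    have h1 : (wit i) i = !K.sgn i := by
      have := (Finset.mem_inter.1 (hmem i hi)).2
      exact ((Finset.mem_filter.1 this).2).1
    have h2 : (wit j) i = K.sgn i := by
      have := (Finset.mem_inter.1 (hmem j hj)).2
      exact ((Finset.mem_filter.1 this).2).2 i hi hne
    rw [hij] at h1
    rw [h1] at h2
    simp at h2

lemma PI_rank_le {d k : ℕ} {K : Conj n} {f : (Fin n → Bool) → Bool}
    (hK : K.rank = d) (hf : f ∈ Pclass n k) (hPI : PrimeImplicant K f) : d ≤ k := by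
  obtain ⟨hsub, hcard⟩ := PI_witness_image hPI
  have hZ : (ZS f).card = k := by
    simpa [zerosCard, ZS] using (Finset.mem_filter.1 hf).2
  have := Finset.card_le_card hsub
  rw [hcard] at this
  rw [Conj.rank] at hK
  omega

lemma perK {d k : ℕ} (K : Conj n) (hK : K.rank = d) :
    ((Pclass n k).filter (fun f => PrimeImplicant K f)).card
      ≤ (2 ^ (n - d)) ^ d * Nat.choose (2 ^ n - 2 ^ (n - d)) (k - d) := by
  classical
  have hKd : K.supp.card = d := hK
  set wit : ((Fin n → Bool) → Bool) → (Fin n → (Fin n → Bool)) :=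
    fun f i => if i ∈ K.supp then pick (ZS f ∩ Side K i) else (fun _ => false) with hwitdef
  set W : Finset (Fin n → (Fin n → Bool)) :=
    Fintype.piFinset (fun i => if i ∈ K.supp then Side K i else {fun _ => false}) with hW
  set R := Finset.powersetCard (k - d)
    (Finset.univ.filter (fun x : Fin n → Bool => ¬ K.covers x)) with hR
  have hmain : ((Pclass n k).filter (fun f => PrimeImplicant K f)).card ≤ (W ×ˢ R).card := by
    apply Finset.card_le_card_of_injOn
      (fun f => (wit f, ZS f \ K.supp.image (wit f)))
    · intro f hf
      rw [Finset.mem_coe, Finset.mem_filter] at hf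
      obtain ⟨hfP, hPI⟩ := hf
      have hZ : (ZS f).card = k := by simpa [zerosCard, ZS] using (Finset.mem_filter.1 hfP).2
      obtain ⟨hsub, hcard⟩ := PI_witness_image (K := K) (f := f) hPI
      rw [Finset.mem_coe, Finset.mem_product]
      constructor
      · rw [hW, Fintype.mem_piFinset]
        intro i
        by_cases hi : i ∈ K.supp
        · simp only [hwitdef, if_pos hi]
          exact (Finset.mem_inter.1 (pick_mem (PI_side_nonempty hPI hi))).2
        · simp [hwitdef, hi]
      · rw [hR, Finset.mem_powersetCard]
        constructor
        · intro x hx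
          rw [Finset.mem_sdiff] at hx
          have hxz : f x = false := by simpa [ZS] using hx.1
          simp only [Finset.mem_filter, Finset.mem_univ, true_and]
          intro hcov
          have := hPI.1 x hcov
          simp [this] at hxz
        · rw [Finset.card_sdiff_of_subset hsub, hZ, hcard, hKd]
    · intro f hf g hg heq
      simp only [Prod.mk.injEq] at heq
      obtain ⟨h1, h2⟩ := heq
      have hPIf : PrimeImplicant K f := (Finset.mem_filter.1 (Finset.mem_coe.1 hf)).2
      have hPIg : PrimeImplicant K g := (Finset.mem_filter.1 (Finset.mem_coe.1 hg)).2
      have hsubf := (PI_witness_image (K := K) (f := f) hPIf).1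
      have hsubg := (PI_witness_image (K := K) (f := g) hPIg).1
      apply eq_of_ZS_eq
      have ef : ZS f = (ZS f \ K.supp.image (wit f)) ∪ K.supp.image (wit f) :=
        (Finset.sdiff_union_of_subset hsubf).symm
      have eg : ZS g = (ZS g \ K.supp.image (wit g)) ∪ K.supp.image (wit g) :=
        (Finset.sdiff_union_of_subset hsubg).symm
      rw [ef, eg, h2, h1]
  have hWcard : W.card = (2 ^ (n - d)) ^ d := by
    rw [hW, Fintype.card_piFinset]
    have hc : ∀ i : Fin n, ((if i ∈ K.supp then Side K i else {fun _ => false}) : Finset (Fin n → Bool)).card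
        = if i ∈ K.supp then 2 ^ (n - d) else 1 := by
      intro i
      by_cases hi : i ∈ K.supp
      · rw [if_pos hi, if_pos hi, Side_card K hi, hKd]
      · rw [if_neg hi, if_neg hi, Finset.card_singleton]
    simp only [hc]
    rw [Finset.prod_ite, Finset.prod_const, Finset.prod_const]
    have h1 : (Finset.univ.filter (fun i : Fin n => i ∈ K.supp)) = K.supp := by ext i; simp
    rw [h1, hKd, one_pow, mul_one]
  have hRcard : R.card = Nat.choose (2 ^ n - 2 ^ (n - d)) (k - d) := by
    rw [hR, Finset.card_powersetCard]
    congr 2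
    have hcov : (Finset.univ.filter (fun x : Fin n → Bool => K.covers x)).card = 2 ^ (n - d) := by
      have h := cube_card K.supp K.sgn
      rw [hKd] at h
      rw [← h]
      congr 1
      ext x
      rw [Finset.mem_filter, Finset.mem_filter]
      simp [Conj.covers]
    have htot := Finset.card_filter_add_card_filter_not
      (s := (Finset.univ : Finset (Fin n → Bool))) (p := fun x => K.covers x)
    have hcard2 : (Finset.univ : Finset (Fin n → Bool)).card = 2 ^ n := by simp
    omega
  calc ((Pclass n k).filter (fun f => PrimeImplicant K f)).card ≤ (W ×ˢ R).card := hmain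
    _ = (2 ^ (n - d)) ^ d * Nat.choose (2 ^ n - 2 ^ (n - d)) (k - d) := by
        rw [Finset.card_product, hWcard, hRcard]

lemma covers_congr {S : Finset (Fin n)} {σ τ : Fin n → Bool}
    (h : ∀ i ∈ S, σ i = τ i) (x : Fin n → Bool) :
    (Conj.mk S σ).covers x ↔ (Conj.mk S τ).covers x := by
  simp only [Conj.covers]
  constructor <;> intro hc i hi
  · rw [← h i hi]; exact hc i hi
  · rw [h i hi]; exact hc i hi

lemma PI_congr {S : Finset (Fin n)} {σ τ : Fin n → Bool}
    (h : ∀ i ∈ S, σ i = τ i) {f : (Fin n → Bool) → Bool}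
    (hPI : PrimeImplicant ⟨S, σ⟩ f) : PrimeImplicant ⟨S, τ⟩ f := by
  constructor
  · intro x hx
    exact hPI.1 x ((covers_congr h x).2 hx)
  · intro i hi hImp
    apply hPI.2 i hi
    intro x hx
    apply hImp x
    exact (covers_congr (S := S.erase i) (fun j hj => h j (Finset.mem_of_mem_erase hj)) x).1 hx

/-- The canonical set of conjunctions of rank `d`. -/
noncomputable def Tset (n d : ℕ) : Finset (Conj n) :=
  ((Finset.univ : Finset (Fin n)).powersetCard d).biUnion
    (fun S => (Finset.univ.filter (fun σ : Fin n → Bool => ∀ i ∉ S, σ i = false)).image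
      (fun σ => (⟨S, σ⟩ : Conj n)))

lemma Tset_rank {d : ℕ} {K : Conj n} (hK : K ∈ Tset n d) : K.rank = d := by
  simp only [Tset, Finset.mem_biUnion, Finset.mem_image, Finset.mem_powersetCard] at hK
  obtain ⟨S, ⟨_, hScard⟩, σ, _, rfl⟩ := hK
  exact hScard

lemma Tset_card {d : ℕ} (hd : d ≤ n) : (Tset n d).card ≤ Nat.choose n d * 2 ^ d := by
  refine le_trans (Finset.card_biUnion_le) ?_
  have hbound : ∀ S ∈ (Finset.univ : Finset (Fin n)).powersetCard d,
      ((Finset.univ.filter (fun σ : Fin n → Bool => ∀ i ∉ S, σ i = false)).image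
        (fun σ => (⟨S, σ⟩ : Conj n))).card ≤ 2 ^ d := by
    intro S hS
    rw [Finset.mem_powersetCard] at hS
    refine le_trans (Finset.card_image_le) ?_
    have he : (Finset.univ.filter (fun σ : Fin n → Bool => ∀ i ∉ S, σ i = false))
        = (Finset.univ.filter (fun σ : Fin n → Bool => ∀ i ∈ Sᶜ, σ i = (fun _ => false) i)) := by
      ext σ
      simp [Finset.mem_compl]
    rw [he, cube_card, Finset.card_compl, Fintype.card_fin, hS.2]
    have : n - (n - d) = d := by
      have := hS.2 ▸ Finset.card_le_univ S
      simp only [Fintype.card_fin] at this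
      omega
    rw [this]
  refine le_trans (Finset.sum_le_card_nsmul _ _ (2 ^ d) hbound) ?_
  rw [smul_eq_mul, Finset.card_powersetCard, Finset.card_univ, Fintype.card_fin]

lemma Pclass_card (k : ℕ) (hk : k ≤ 2 ^ n) :
    (Pclass n k).card = Nat.choose (2 ^ n) k := by
  have : (Pclass n k).card = (Finset.powersetCard k (Finset.univ : Finset (Fin n → Bool))).card := by
    apply Finset.card_bij' (fun f _ => ZS f)
      (fun Z _ => (fun x => decide (x ∉ Z)))
    · intro f hf
      simp only [Finset.mem_powersetCard]
      refine ⟨Finset.subset_univ _, ?_⟩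
      simpa [zerosCard, ZS] using (Finset.mem_filter.1 hf).2
    · intro Z hZ
      rw [Pclass, Finset.mem_filter]; simp only [Finset.mem_univ, true_and, zerosCard]
      have : (Finset.univ.filter (fun x => decide (x ∉ Z) = false)) = Z := by
        ext x; simp
      rw [this]
      simpa [Finset.mem_powersetCard] using hZ
    · intro f hf
      funext x
      by_cases h : f x = false
      · simp [ZS, h]
      · simp only [ZS]
        have : f x = true := by cases hfx : f x; exact absurd hfx h; rfl
        simp [this]
    · intro Z hZ
      ext x; simp [ZS]
  rw [this, Finset.card_powersetCard]
  congr 1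
  simp

lemma chain (M k d : ℕ) (hdk : d ≤ k) (hkM : k ≤ M) :
    Nat.choose M (k - d) * (M - k + 1) ^ d ≤ Nat.choose M k * k ^ d := by
  induction d with
  | zero => simp
  | succ d ih =>
    have hd : d ≤ k := Nat.le_of_succ_le hdk
    have ih' := ih hd
    have hkey : Nat.choose M (k - d - 1) * (M - k + 1) ≤ Nat.choose M (k - d) * (k - d) := by
      have h1 : k - d = (k - d - 1) + 1 := by omega
      have h2 := Nat.choose_succ_right_eq M (k - d - 1)
      rw [← h1] at h2
      -- h2 : choose M (k-d) * (k-d) = choose M (k-d-1) * (M - (k-d-1))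
      rw [h2]
      apply Nat.mul_le_mul_left
      omega
    calc Nat.choose M (k - (d+1)) * (M - k + 1) ^ (d+1)
        = (Nat.choose M (k - d - 1) * (M - k + 1)) * (M - k + 1) ^ d := by
          have h3 : k - (d+1) = k - d - 1 := by omega
          rw [h3, pow_succ]; ring
      _ ≤ (Nat.choose M (k - d) * (k - d)) * (M - k + 1) ^ d := Nat.mul_le_mul_right _ hkey
      _ ≤ (Nat.choose M (k - d) * (M - k + 1) ^ d) * k := by
          have : k - d ≤ k := Nat.sub_le _ _
          calc (Nat.choose M (k - d) * (k - d)) * (M - k + 1) ^ d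
              = (Nat.choose M (k - d) * (M - k + 1) ^ d) * (k - d) := by ring
            _ ≤ (Nat.choose M (k - d) * (M - k + 1) ^ d) * k := Nat.mul_le_mul_left _ this
      _ ≤ (Nat.choose M k * k ^ d) * k := Nat.mul_le_mul_right _ ih'
      _ = Nat.choose M k * k ^ (d+1) := by rw [pow_succ]; ring


lemma cover_biUnion {d k : ℕ} :
    ((Pclass n k).filter (fun f => ∃ K : Conj n, K.rank = d ∧ PrimeImplicant K f))
      ⊆ (Tset n d).biUnion (fun K => (Pclass n k).filter (fun f => PrimeImplicant K f)) := by
  intro f hf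
  rw [Finset.mem_filter] at hf
  obtain ⟨hfP, K0, hK0rank, hK0PI⟩ := hf
  set σ' : Fin n → Bool := fun i => if i ∈ K0.supp then K0.sgn i else false with hσ'
  have hK0eta : K0 = ⟨K0.supp, K0.sgn⟩ := rfl
  have hPI' : PrimeImplicant ⟨K0.supp, σ'⟩ f := by
    apply PI_congr (σ := K0.sgn) (fun i hi => by simp [hσ', hi])
    rw [← hK0eta]; exact hK0PI
  rw [Finset.mem_biUnion]
  refine ⟨⟨K0.supp, σ'⟩, ?_, ?_⟩
  · simp only [Tset, Finset.mem_biUnion, Finset.mem_image, Finset.mem_powersetCard]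
    refine ⟨K0.supp, ⟨Finset.subset_univ _, hK0rank⟩, σ', ?_, rfl⟩
    simp only [Finset.mem_filter, Finset.mem_univ, true_and]
    intro i hi
    simp [hσ', hi]
  · rw [Finset.mem_filter]
    exact ⟨hfP, hPI'⟩

end Aux

/-- The fraction of functions in `P_k^n` possessing at least one prime implicant
of rank `d` is at most `2^d · C(n, d) · (k / 2^(d−1))^d`. -/
theorem stmt2 (n d k : ℕ) (hn : 1 ≤ n) (hd1 : 1 ≤ d) (hdn : d ≤ n)
    (hk1 : 1 ≤ k) (hk2 : k ≤ 2 ^ n - 2 ^ (n - d)) :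
    frac n k (fun f => ∃ K : Conj n, K.rank = d ∧ PrimeImplicant K f) ≤
      (2 : ℝ) ^ d * (Nat.choose n d : ℝ) * ((k : ℝ) / 2 ^ (d - 1)) ^ d := by
  classical
  have hmN : 2 ^ (n - d) ≤ 2 ^ n := Nat.pow_le_pow_right (by norm_num) (Nat.sub_le n d)
  have hkN : k ≤ 2 ^ n := le_trans hk2 (Nat.sub_le _ _)
  have hPcard : (Pclass n k).card = Nat.choose (2 ^ n) k := Aux.Pclass_card k hkN
  have hchoosepos : 0 < Nat.choose (2 ^ n) k := Nat.choose_pos hkN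
  have hbpos : (0 : ℝ) < ((Pclass n k).card : ℝ) := by
    rw [hPcard]; exact_mod_cast hchoosepos
  have hRHSpos : (0 : ℝ) ≤ (2 : ℝ) ^ d * (Nat.choose n d : ℝ) * ((k : ℝ) / 2 ^ (d - 1)) ^ d := by
    positivity
  by_cases hcase : 2 ^ (d - 1) ≤ k
  · -- trivial case: RHS ≥ 1
    have h1 : frac n k (fun f => ∃ K : Conj n, K.rank = d ∧ PrimeImplicant K f) ≤ 1 := by
      rw [frac, div_le_one hbpos]
      exact_mod_cast Finset.card_filter_le _ _
    have e1 : (1 : ℝ) ≤ 2 ^ d := one_le_pow₀ (by norm_num)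
    have e2 : (1 : ℝ) ≤ (Nat.choose n d : ℝ) := by
      exact_mod_cast Nat.choose_pos hdn
    have e3 : (1 : ℝ) ≤ ((k : ℝ) / 2 ^ (d - 1)) ^ d := by
      apply one_le_pow₀
      rw [le_div_iff₀ (by positivity), one_mul]
      exact_mod_cast hcase
    have h12 : (1 : ℝ) ≤ 2 ^ d * (Nat.choose n d : ℝ) := by nlinarith
    exact le_trans h1 (le_trans h12 (le_mul_of_one_le_right (by linarith) e3))
  · push_neg at hcase
    have hd2 : 2 ≤ d := by
      by_contra h
      have hd1' : d = 1 := by omega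
      rw [hd1'] at hcase
      simp at hcase
      omega
    set A := (Pclass n k).filter (fun f => ∃ K : Conj n, K.rank = d ∧ PrimeImplicant K f) with hA
    by_cases hAne : A.Nonempty
    · -- main case
      obtain ⟨f0, hf0⟩ := hAne
      rw [hA, Finset.mem_filter] at hf0
      obtain ⟨hf0P, K0, hK0r, hK0PI⟩ := hf0
      have hdk : d ≤ k := Aux.PI_rank_le hK0r hf0P hK0PI
      have hkM : k ≤ 2 ^ n - 2 ^ (n - d) := hk2
      -- union bound
      have hAle : A.card ≤ Nat.choose n d * 2 ^ d *
          ((2 ^ (n - d)) ^ d * Nat.choose (2 ^ n - 2 ^ (n - d)) (k - d)) := by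
        calc A.card ≤ ((Aux.Tset n d).biUnion
              (fun K => (Pclass n k).filter (fun f => PrimeImplicant K f))).card :=
              Finset.card_le_card Aux.cover_biUnion
          _ ≤ ∑ K ∈ Aux.Tset n d, ((Pclass n k).filter (fun f => PrimeImplicant K f)).card :=
              Finset.card_biUnion_le
          _ ≤ (Aux.Tset n d).card *
              ((2 ^ (n - d)) ^ d * Nat.choose (2 ^ n - 2 ^ (n - d)) (k - d)) := by
              have h := Finset.sum_le_card_nsmul (Aux.Tset n d) _
                ((2 ^ (n - d)) ^ d * Nat.choose (2 ^ n - 2 ^ (n - d)) (k - d))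
                (fun K hK => Aux.perK K (Aux.Tset_rank hK))
              simpa using h
          _ ≤ Nat.choose n d * 2 ^ d *
              ((2 ^ (n - d)) ^ d * Nat.choose (2 ^ n - 2 ^ (n - d)) (k - d)) :=
              Nat.mul_le_mul_right _ (Aux.Tset_card hdn)
      -- key numeric inequality
      have hab : 2 ^ (n - d) * 2 ^ (d - 1) = 2 ^ (n - 1) := by
        rw [← pow_add]; congr 1; omega
      have hsum : 2 ^ (n - d) + 2 ^ (d - 1) ≤ 2 ^ (n - 1) + 1 := by
        have ha : 1 ≤ 2 ^ (n - d) := Nat.one_le_two_pow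
        have hb : 1 ≤ 2 ^ (d - 1) := Nat.one_le_two_pow
        obtain ⟨a', ha'⟩ := Nat.exists_eq_add_of_le ha
        obtain ⟨b', hb'⟩ := Nat.exists_eq_add_of_le hb
        rw [← hab, ha', hb']
        nlinarith
      have h2n : 2 ^ (n - 1) * 2 = 2 ^ n := by
        rw [← pow_succ]; congr 1; omega
      have hMk : 2 ^ (n - 1) ≤ 2 ^ n - 2 ^ (n - d) - k + 1 := by omega
      have hNI : (2 ^ (n - d)) ^ d * Nat.choose (2 ^ n - 2 ^ (n - d)) (k - d) * (2 ^ (d - 1)) ^ d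
          ≤ k ^ d * Nat.choose (2 ^ n) k := by
        have hchain := Aux.chain (2 ^ n - 2 ^ (n - d)) k d hdk hkM
        calc (2 ^ (n - d)) ^ d * Nat.choose (2 ^ n - 2 ^ (n - d)) (k - d) * (2 ^ (d - 1)) ^ d
            = Nat.choose (2 ^ n - 2 ^ (n - d)) (k - d) * (2 ^ (n - d) * 2 ^ (d - 1)) ^ d := by
              rw [mul_pow]; ring
          _ = Nat.choose (2 ^ n - 2 ^ (n - d)) (k - d) * (2 ^ (n - 1)) ^ d := by rw [hab]
          _ ≤ Nat.choose (2 ^ n - 2 ^ (n - d)) (k - d) * (2 ^ n - 2 ^ (n - d) - k + 1) ^ d :=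
              Nat.mul_le_mul_left _ (Nat.pow_le_pow_left hMk d)
          _ ≤ Nat.choose (2 ^ n - 2 ^ (n - d)) k * k ^ d := hchain
          _ ≤ Nat.choose (2 ^ n) k * k ^ d :=
              Nat.mul_le_mul_right _ (Nat.choose_le_choose k (Nat.sub_le _ _))
          _ = k ^ d * Nat.choose (2 ^ n) k := by ring
      -- combine
      have hnat : A.card * (2 ^ (d - 1)) ^ d
          ≤ 2 ^ d * Nat.choose n d * (k ^ d * Nat.choose (2 ^ n) k) := by
        calc A.card * (2 ^ (d - 1)) ^ d
            ≤ (Nat.choose n d * 2 ^ d *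
                ((2 ^ (n - d)) ^ d * Nat.choose (2 ^ n - 2 ^ (n - d)) (k - d))) * (2 ^ (d - 1)) ^ d :=
              Nat.mul_le_mul_right _ hAle
          _ = Nat.choose n d * 2 ^ d *
                ((2 ^ (n - d)) ^ d * Nat.choose (2 ^ n - 2 ^ (n - d)) (k - d) * (2 ^ (d - 1)) ^ d) := by
              ring
          _ ≤ Nat.choose n d * 2 ^ d * (k ^ d * Nat.choose (2 ^ n) k) :=
              Nat.mul_le_mul_left _ hNI
          _ = 2 ^ d * Nat.choose n d * (k ^ d * Nat.choose (2 ^ n) k) := by ring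
      rw [frac, div_le_iff₀ hbpos]
      have hpowpos : (0 : ℝ) < ((2 : ℝ) ^ (d - 1)) ^ d := by positivity
      have hcast : ((A.card : ℝ)) * ((2 : ℝ) ^ (d - 1)) ^ d
          ≤ 2 ^ d * (Nat.choose n d : ℝ) * ((k : ℝ) ^ d * (Nat.choose (2 ^ n) k : ℝ)) := by
        exact_mod_cast hnat
      rw [hPcard]
      calc ((A.card : ℝ))
          ≤ (2 ^ d * (Nat.choose n d : ℝ) * ((k : ℝ) ^ d * (Nat.choose (2 ^ n) k : ℝ)))
              / ((2 : ℝ) ^ (d - 1)) ^ d := by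
            rw [le_div_iff₀ hpowpos]; exact hcast
        _ = 2 ^ d * (Nat.choose n d : ℝ) * ((k : ℝ) / 2 ^ (d - 1)) ^ d * (Nat.choose (2 ^ n) k : ℝ) := by
            rw [div_pow]; field_simp
    · -- A empty
      rw [Finset.not_nonempty_iff_eq_empty] at hAne
      rw [frac]
      rw [show ((Pclass n k).filter
          (fun f => ∃ K : Conj n, K.rank = d ∧ PrimeImplicant K f)) = A from rfl, hAne]
      simpa using hRHSpos
end

section
/- Let K be a fixed conjunction of rank d over n variables (1 ≤ d ≤ n) and k ≥ 1 with k ≤ 2^n − 2^{n−d}. The fraction of functions f in P_k^n for which K is a prime implicant of f is at most (k · 2^{1−d})^d. -/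
open scoped Classical

namespace Stmt3Aux

variable {n : ℕ}

noncomputable def cube (s : Finset (Fin n)) (σ : Fin n → Bool) : Finset (Fin n → Bool) :=
  Fintype.piFinset (fun i => if i ∈ s then {σ i} else Finset.univ)

lemma mem_cube {s : Finset (Fin n)} {σ : Fin n → Bool} {x : Fin n → Bool} :
    x ∈ cube s σ ↔ ∀ j ∈ s, x j = σ j := by
  simp only [cube, Fintype.mem_piFinset]
  constructor
  · intro h j hj
    have := h j
    simpa [hj] using this
  · intro h j
    by_cases hj : j ∈ s
    · simp [hj, h j hj]
    · simp [hj]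

lemma card_cube (s : Finset (Fin n)) (σ : Fin n → Bool) :
    (cube s σ).card = 2 ^ (n - s.card) := by
  rw [cube, Fintype.card_piFinset]
  calc ∏ i, (if i ∈ s then ({σ i} : Finset Bool) else Finset.univ).card
      = ∏ i, (if i ∈ s then 1 else 2) := by
        refine Finset.prod_congr rfl fun i _ => ?_
        split <;> simp
    _ = (∏ i ∈ s, (if i ∈ s then 1 else 2)) * ∏ i ∈ sᶜ, (if i ∈ s then 1 else 2) :=
        (Finset.prod_mul_prod_compl s _).symm
    _ = 2 ^ (n - s.card) := by
        have h2 : ∏ i ∈ s, (if i ∈ s then (1:ℕ) else 2) = 1 :=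
          Finset.prod_eq_one fun i hi => by simp [hi]
        have h3 : ∏ i ∈ sᶜ, (if i ∈ s then (1:ℕ) else 2) = 2 ^ sᶜ.card := by
          rw [Finset.prod_congr rfl fun i hi => if_neg (Finset.mem_compl.mp hi),
              Finset.prod_const]
        rw [h2, h3, one_mul, Finset.card_compl, Fintype.card_fin]

noncomputable def zset (f : (Fin n → Bool) → Bool) : Finset (Fin n → Bool) :=
  Finset.univ.filter (fun x => f x = false)

lemma zset_card (f : (Fin n → Bool) → Bool) : (zset f).card = zerosCard f := rfl

lemma zset_inj {f g : (Fin n → Bool) → Bool} (h : zset f = zset g) : f = g := by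
  funext x
  have hx : (f x = false) ↔ (g x = false) := by
    constructor <;> intro hh
    · have hm : x ∈ zset f := by simp [zset, hh]
      rw [h] at hm
      simpa [zset] using hm
    · have hm : x ∈ zset g := by simp [zset, hh]
      rw [← h] at hm
      simpa [zset] using hm
  cases hf : f x <;> cases hg : g x <;> simp_all

lemma card_Pclass (n k : ℕ) : (Pclass n k).card = (2 ^ n).choose k := by
  have h : (Pclass n k).card
      = (Finset.powersetCard k (Finset.univ : Finset (Fin n → Bool))).card := by
    refine Finset.card_bij' (fun f _ => zset f)
      (fun S _ => fun x => if x ∈ S then false else true) ?_ ?_ ?_ ?_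
    · intro f hf
      rw [Finset.mem_powersetCard]
      refine ⟨Finset.filter_subset _ _, ?_⟩
      rw [zset_card]
      simpa [Pclass] using hf
    · intro S hS
      rw [Finset.mem_powersetCard] at hS
      simp only [Pclass, Finset.mem_filter, Finset.mem_univ, true_and]
      rw [← zset_card]
      have : zset (fun x => if x ∈ S then false else true) = S := by
        ext x
        simp [zset]
      rw [this]
      exact hS.2
    · intro f hf
      funext x
      by_cases hx : x ∈ zset f
      · simp only [hx, if_pos]
        simpa [zset] using hx
      · simp only [hx, if_neg, if_false]
        simp only [zset, Finset.mem_filter, Finset.mem_univ, true_and] at hx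
        cases h : f x
        · exact absurd h hx
        · rfl
    · intro S hS
      ext x
      simp [zset]
  rw [h, Finset.card_powersetCard, Finset.card_univ]
  congr 1
  simp

lemma desc_le {k N : ℕ} (d : ℕ) (hkN : k ≤ N) :
    k.descFactorial d * N ^ d ≤ N.descFactorial d * k ^ d := by
  induction d with
  | zero => simp
  | succ d ih =>
    rw [Nat.descFactorial_succ, Nat.descFactorial_succ, pow_succ, pow_succ]
    have h1 : (k - d) * N ≤ (N - d) * k := by
      rw [Nat.sub_mul, Nat.sub_mul]
      rw [Nat.mul_comm k N]
      exact Nat.sub_le_sub_left (Nat.mul_le_mul_left d hkN) _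
    calc (k - d) * k.descFactorial d * (N ^ d * N)
        = ((k - d) * N) * (k.descFactorial d * N ^ d) := by ring
      _ ≤ ((N - d) * k) * (N.descFactorial d * k ^ d) := Nat.mul_le_mul h1 ih
      _ = (N - d) * N.descFactorial d * (k ^ d * k) := by ring

lemma choose_le {k N : ℕ} (d : ℕ) (hkN : k ≤ N) :
    k.choose d * N ^ d ≤ N.choose d * k ^ d := by
  have h := desc_le d hkN
  rw [Nat.descFactorial_eq_factorial_mul_choose, Nat.descFactorial_eq_factorial_mul_choose,
      mul_assoc, mul_assoc] at h
  exact Nat.le_of_mul_le_mul_left h (Nat.factorial_pos d)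

lemma key_nat (N m d k : ℕ) (hdk : d ≤ k) (hkN : k ≤ N) :
    m ^ d * (N - d).choose (k - d) * N ^ d ≤ N.choose k * (2 * k * m) ^ d := by
  have hpos : 0 < k.choose d := Nat.choose_pos hdk
  have hid : N.choose k * k.choose d = N.choose d * (N - d).choose (k - d) :=
    Nat.choose_mul hdk
  refine Nat.le_of_mul_le_mul_right ?_ hpos
  calc m ^ d * (N - d).choose (k - d) * N ^ d * k.choose d
      = m ^ d * (N - d).choose (k - d) * (k.choose d * N ^ d) := by ring
    _ ≤ m ^ d * (N - d).choose (k - d) * (N.choose d * k ^ d) :=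
        Nat.mul_le_mul_left _ (choose_le d hkN)
    _ = m ^ d * k ^ d * (N.choose d * (N - d).choose (k - d)) := by ring
    _ = m ^ d * k ^ d * (N.choose k * k.choose d) := by rw [hid]
    _ ≤ (2 * k * m) ^ d * (N.choose k * k.choose d) := by
        refine Nat.mul_le_mul_right _ ?_
        calc m ^ d * k ^ d = (m * k) ^ d := by rw [mul_pow]
          _ ≤ (2 * k * m) ^ d := Nat.pow_le_pow_left (by nlinarith) d
    _ = N.choose k * (2 * k * m) ^ d * k.choose d := by ring

lemma flip_injOn {s : Finset (Fin n)} {σ : Fin n → Bool} {z : Fin n → (Fin n → Bool)}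
    (hz : ∀ i ∈ s, z i ∈ cube s (fun j => if j = i then !σ j else σ j)) :
    Set.InjOn z s := by
  intro i hi j hj hij
  by_contra hne
  have hi' : i ∈ s := hi
  have hj' : j ∈ s := hj
  have h1 := mem_cube.mp (hz i hi') j hj'
  have h2 := mem_cube.mp (hz j hj') j hj'
  rw [hij] at h1
  rw [if_neg (fun h : j = i => hne (h ▸ rfl))] at h1
  rw [if_pos rfl] at h2
  rw [h1] at h2
  exact (Bool.self_ne_not (σ j)) h2

end Stmt3Aux

/-- For a fixed conjunction `K` of rank `d`, the fraction of functions in `P_k^n`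
for which `K` is a prime implicant is at most `(k · 2^(1−d))^d`. -/
theorem stmt3 (n d k : ℕ) (hn : 1 ≤ n) (hd1 : 1 ≤ d) (hdn : d ≤ n)
    (K : Conj n) (hK : K.rank = d)
    (hk1 : 1 ≤ k) (hk2 : k ≤ 2 ^ n - 2 ^ (n - d)) :
    frac n k (fun f => PrimeImplicant K f) ≤ ((k : ℝ) * (2 : ℝ) ^ ((1 : ℤ) - (d : ℤ))) ^ d := by
  classical
  have hsK : K.supp.card = d := hK
  set N : ℕ := 2 ^ n with hN
  set m : ℕ := 2 ^ (n - d) with hm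
  set A : Finset ((Fin n → Bool) → Bool) :=
    (Pclass n k).filter (fun f => PrimeImplicant K f) with hA
  have hkN : k ≤ N := le_trans hk2 (Nat.sub_le _ _)
  have hNck : (0:ℝ) < ((N.choose k : ℕ) : ℝ) := by
    exact_mod_cast Nat.choose_pos hkN
  have hRHSnn : (0:ℝ) ≤ ((k : ℝ) * (2 : ℝ) ^ ((1 : ℤ) - (d : ℤ))) ^ d := by positivity
  have hfrac : frac n k (fun f => PrimeImplicant K f) = (A.card : ℝ) / ((N.choose k : ℕ) : ℝ) := by
    rw [frac, Stmt3Aux.card_Pclass]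
  rcases A.eq_empty_or_nonempty with hAe | hAne
  · rw [hfrac, hAe]
    simpa using hRHSnn
  -- the flipped subcubes
  set Qi : Fin n → Finset (Fin n → Bool) :=
    fun i => Stmt3Aux.cube K.supp (fun j => if j = i then !K.sgn j else K.sgn j) with hQi
  -- every prime implicant has a zero in each flipped subcube
  have hwitA : ∀ f ∈ A, ∀ i ∈ K.supp, ∃ x, x ∈ Qi i ∧ f x = false := by
    intro f hf i hi
    have hfp : PrimeImplicant K f := (Finset.mem_filter.mp hf).2
    have h2 := hfp.2 i hi
    rw [Implicant] at h2
    push_neg at h2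
    obtain ⟨x, hxc, hxf⟩ := h2
    have hxf' : f x = false := by
      cases h : f x
      · rfl
      · exact absurd h hxf
    have hxe : ∀ j ∈ K.supp.erase i, x j = K.sgn j := hxc
    have hxi : x i = !K.sgn i := by
      by_contra hxi
      have hxi2 : x i = K.sgn i := by
        cases h1 : x i <;> cases h2 : K.sgn i <;> simp_all
      have hcov : K.covers x := by
        intro j hj
        by_cases hji : j = i
        · subst hji; exact hxi2
        · exact hxe j (Finset.mem_erase.mpr ⟨hji, hj⟩)
      have := hfp.1 x hcov
      rw [this] at hxf'
      exact Bool.noConfusion hxf'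
    refine ⟨x, ?_, hxf'⟩
    rw [hQi]
    rw [Stmt3Aux.mem_cube]
    intro j hj
    by_cases hji : j = i
    · subst hji
      rw [if_pos rfl]
      exact hxi
    · rw [if_neg hji]
      exact hxe j (Finset.mem_erase.mpr ⟨hji, hj⟩)
  -- a choice of zeros
  set zw : ((Fin n → Bool) → Bool) → Fin n → (Fin n → Bool) := fun f i =>
    if h : i ∈ K.supp ∧ ∃ x, x ∈ Qi i ∧ f x = false then h.2.choose else fun _ => false with hzw
  have hzw1 : ∀ f ∈ A, ∀ i ∈ K.supp, zw f i ∈ Qi i ∧ f (zw f i) = false := by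
    intro f hf i hi
    have h := hwitA f hf i hi
    rw [hzw]
    simp only [dif_pos (⟨hi, h⟩ : _ ∧ _)]
    exact h.choose_spec
  -- basic facts for f ∈ A
  have himg_sub : ∀ f ∈ A, K.supp.image (zw f) ⊆ Stmt3Aux.zset f := by
    intro f hf x hx
    obtain ⟨i, hi, rfl⟩ := Finset.mem_image.mp hx
    simp [Stmt3Aux.zset, (hzw1 f hf i hi).2]
  have hzw_inj : ∀ f ∈ A, Set.InjOn (zw f) K.supp := by
    intro f hf
    exact Stmt3Aux.flip_injOn (fun i hi => (hzw1 f hf i hi).1)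
  have himg_card : ∀ f ∈ A, (K.supp.image (zw f)).card = d := by
    intro f hf
    rw [Finset.card_image_of_injOn (hzw_inj f hf), hsK]
  have hzsetcard : ∀ f ∈ A, (Stmt3Aux.zset f).card = k := by
    intro f hf
    rw [Stmt3Aux.zset_card]
    have := (Finset.mem_filter.mp hf).1
    simpa [Pclass] using this
  have hdk : d ≤ k := by
    obtain ⟨f, hf⟩ := hAne
    calc d = (K.supp.image (zw f)).card := (himg_card f hf).symm
      _ ≤ (Stmt3Aux.zset f).card := Finset.card_le_card (himg_sub f hf)
      _ = k := hzsetcard f hf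
  have hsd_card : ∀ f ∈ A, (Stmt3Aux.zset f \ K.supp.image (zw f)).card = k - d := by
    intro f hf
    rw [Finset.card_sdiff_of_subset (himg_sub f hf), himg_card f hf, hzsetcard f hf]
  -- the target set
  set Zfin : Finset (Fin n → (Fin n → Bool)) :=
    Fintype.piFinset (fun i => if i ∈ K.supp then Qi i else {fun _ => false}) with hZfin
  set T : Finset ((Fin n → (Fin n → Bool)) × Finset (Fin n → Bool)) :=
    Zfin.biUnion (fun z =>
      (Finset.powersetCard (k - d) (Finset.univ \ K.supp.image z)).image (fun S => (z, S)))
    with hT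
  set Φ : ((Fin n → Bool) → Bool) → (Fin n → (Fin n → Bool)) × Finset (Fin n → Bool) :=
    fun f => (zw f, Stmt3Aux.zset f \ K.supp.image (zw f)) with hΦ
  have hmaps : ∀ f ∈ A, Φ f ∈ T := by
    intro f hf
    rw [hT, Finset.mem_biUnion]
    refine ⟨zw f, ?_, ?_⟩
    · rw [hZfin, Fintype.mem_piFinset]
      intro i
      by_cases hi : i ∈ K.supp
      · rw [if_pos hi]
        exact (hzw1 f hf i hi).1
      · rw [if_neg hi]
        rw [hzw]
        simp only [Finset.mem_singleton]
        rw [dif_neg (fun h => hi h.1)]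
    · rw [Finset.mem_image]
      refine ⟨Stmt3Aux.zset f \ K.supp.image (zw f), ?_, rfl⟩
      rw [Finset.mem_powersetCard]
      constructor
      · intro x hx
        exact Finset.mem_sdiff.mpr ⟨Finset.mem_univ x, (Finset.mem_sdiff.mp hx).2⟩
      · exact hsd_card f hf
  have hΦinj : Set.InjOn Φ A := by
    intro f hf g hg hfg
    rw [hΦ] at hfg
    have h1 : zw f = zw g := congrArg Prod.fst hfg
    have h2 : Stmt3Aux.zset f \ K.supp.image (zw f)
        = Stmt3Aux.zset g \ K.supp.image (zw g) := congrArg Prod.snd hfg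
    have h3 : K.supp.image (zw f) = K.supp.image (zw g) := by rw [h1]
    have h4 : Stmt3Aux.zset f = Stmt3Aux.zset g := by
      have hf4 := (Finset.sdiff_union_of_subset (himg_sub f hf)).symm
      have hg4 := (Finset.sdiff_union_of_subset (himg_sub g hg)).symm
      rw [hf4, hg4, h2, h3]
    exact Stmt3Aux.zset_inj h4
  have hAcard : A.card ≤ m ^ d * (N - d).choose (k - d) := by
    have hAT : A.card ≤ T.card := Finset.card_le_card_of_injOn Φ hmaps hΦinj
    have hTcard : T.card ≤ m ^ d * (N - d).choose (k - d) := by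
      rw [hT]
      refine le_trans (Finset.card_biUnion_le) ?_
      have hb : ∀ z ∈ Zfin,
          ((Finset.powersetCard (k - d) (Finset.univ \ K.supp.image z)).image
            (fun S => (z, S))).card ≤ (N - d).choose (k - d) := by
        intro z hz
        refine le_trans Finset.card_image_le ?_
        rw [Finset.card_powersetCard]
        have hzc : ∀ i ∈ K.supp, z i ∈ Qi i := by
          intro i hi
          have := Fintype.mem_piFinset.mp (hZfin ▸ hz) i
          rwa [if_pos hi] at this
        have hinj : Set.InjOn z K.supp := Stmt3Aux.flip_injOn hzc
        have hc : (Finset.univ \ K.supp.image z).card = N - d := by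
          rw [Finset.card_sdiff_of_subset (Finset.subset_univ _), Finset.card_univ,
              Finset.card_image_of_injOn hinj, hsK]
          congr 1
          simp [hN]
        rw [hc]
      calc ∑ z ∈ Zfin, ((Finset.powersetCard (k - d) (Finset.univ \ K.supp.image z)).image
              (fun S => (z, S))).card
          ≤ ∑ _z ∈ Zfin, (N - d).choose (k - d) := Finset.sum_le_sum hb
        _ = Zfin.card * (N - d).choose (k - d) := by rw [Finset.sum_const, smul_eq_mul]
        _ = m ^ d * (N - d).choose (k - d) := by
            congr 1
            rw [hZfin, Fintype.card_piFinset]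
            calc ∏ i, (if i ∈ K.supp then Qi i else {fun _ => false}).card
                = ∏ i, (if i ∈ K.supp then m else 1) := by
                  refine Finset.prod_congr rfl fun i _ => ?_
                  by_cases hi : i ∈ K.supp
                  · rw [if_pos hi, if_pos hi, hQi, Stmt3Aux.card_cube, hsK]
                  · rw [if_neg hi, if_neg hi, Finset.card_singleton]
              _ = (∏ i ∈ K.supp, (if i ∈ K.supp then m else 1))
                    * ∏ i ∈ K.suppᶜ, (if i ∈ K.supp then m else 1) :=
                  (Finset.prod_mul_prod_compl K.supp _).symm
              _ = m ^ d := by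
                  have e1 : ∏ i ∈ K.supp, (if i ∈ K.supp then m else 1) = m ^ d := by
                    rw [Finset.prod_congr rfl fun i hi => if_pos hi, Finset.prod_const, hsK]
                  have e2 : ∏ i ∈ K.suppᶜ, (if i ∈ K.supp then m else 1) = 1 :=
                    Finset.prod_eq_one fun i hi => if_neg (Finset.mem_compl.mp hi)
                  rw [e1, e2, mul_one]
    exact le_trans hAT hTcard
  -- final arithmetic
  rw [hfrac, div_le_iff₀ hNck]
  have hkey := Stmt3Aux.key_nat N m d k hdk hkN
  have hnat : A.card * N ^ d ≤ N.choose k * (2 * k * m) ^ d :=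
    le_trans (Nat.mul_le_mul_right _ hAcard) hkey
  have hcast : (A.card : ℝ) * (N:ℝ) ^ d ≤ ((N.choose k : ℕ) : ℝ) * ((2 * k * m : ℕ) : ℝ) ^ d := by
    exact_mod_cast hnat
  have hNd : (0:ℝ) < (N:ℝ) ^ d := by positivity
  have h5 : (A.card : ℝ) ≤ ((N.choose k : ℕ) : ℝ) * ((2 * k * m : ℕ) : ℝ) ^ d / (N:ℝ) ^ d := by
    rw [le_div_iff₀ hNd]
    exact hcast
  refine le_trans h5 (le_of_eq ?_)
  have hbase : ((2 * k * m : ℕ) : ℝ) / (N : ℝ) = (k : ℝ) * (2 : ℝ) ^ ((1 : ℤ) - (d : ℤ)) := by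
    have e1 : ((m : ℕ) : ℝ) = (2:ℝ) ^ ((n:ℤ) - (d:ℤ)) := by
      rw [hm]
      push_cast
      rw [← zpow_natCast]
      congr 1
      omega
    have e2 : ((N : ℕ) : ℝ) = (2:ℝ) ^ ((n:ℤ)) := by
      rw [hN]
      push_cast
      rw [← zpow_natCast]
    push_cast
    rw [e1, e2]
    rw [div_eq_iff (by positivity)]
    have h2 : (2:ℝ) ^ ((1:ℤ) - (d:ℤ)) * 2 ^ (n:ℤ) = 2 * 2 ^ ((n:ℤ) - (d:ℤ)) := by
      rw [← zpow_add₀ (two_ne_zero : (2:ℝ) ≠ 0),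
          show (1:ℤ) - d + n = 1 + ((n:ℤ) - d) by ring,
          zpow_add₀ (two_ne_zero : (2:ℝ) ≠ 0), zpow_one]
    linear_combination (-(k:ℝ)) * h2
  rw [mul_div_assoc, ← div_pow, hbase, mul_comm]
end

section
/- Let f be a Boolean function on n variables, let K be an implicant of f, and let z be a zero of f (f z = false). Then K covers at most one point of the set {y : y is at Hamming distance 1 from z and f y = true}; i.e., the set of points covered by K within this set has cardinality at most 1. -/
open scoped Classical

lemma dist_one_aux {n : ℕ} {y z : Fin n → Bool} (h : hammingDist y z = 1) :
    ∃ i, y i ≠ z i ∧ ∀ j, j ≠ i → y j = z j := by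
  unfold hammingDist at h
  obtain ⟨i, hi⟩ := Finset.card_eq_one.mp h
  refine ⟨i, ?_, fun j hj => ?_⟩
  · have : i ∈ Finset.univ.filter fun i => y i ≠ z i := hi ▸ Finset.mem_singleton_self i
    simpa using this
  · by_contra hne
    have : j ∈ Finset.univ.filter fun i => y i ≠ z i := by simpa using hne
    rw [hi, Finset.mem_singleton] at this
    exact hj this

/-- If `K` is an implicant of `f` and `z` is a zero of `f`, then `K` covers at
most one point of the set of ones of `f` at Hamming distance 1 from `z`. -/
theorem stmt10 (n : ℕ) (f : (Fin n → Bool) → Bool) (K : Conj n)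
    (hK : Implicant K f) (z : Fin n → Bool) (hz : f z = false) :
    (Finset.univ.filter
        (fun y : Fin n → Bool =>
          hammingDist y z = 1 ∧ f y = true ∧ K.covers y)).card ≤ 1 := by
  rw [Finset.card_le_one]
  intro y1 h1 y2 h2
  simp only [Finset.mem_filter, Finset.mem_univ, true_and] at h1 h2
  obtain ⟨hd1, -, hc1⟩ := h1
  obtain ⟨hd2, -, hc2⟩ := h2
  obtain ⟨i1, hi1, hu1⟩ := dist_one_aux hd1
  obtain ⟨i2, hi2, hu2⟩ := dist_one_aux hd2
  have hnz : ¬ K.covers z := fun hc => by simp [hK z hc] at hz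
  have key : ∀ (y : Fin n → Bool) (i : Fin n), y i ≠ z i → (∀ j, j ≠ i → y j = z j) →
      K.covers y → i ∈ K.supp ∧ z i ≠ K.sgn i := by
    intro y i hi hu hc
    obtain ⟨j, hj, hjz⟩ := not_forall₂.mp hnz
    have hji : j = i := by
      by_contra hne
      exact hjz ((hu j hne) ▸ hc j hj)
    subst hji
    exact ⟨hj, hjz⟩
  obtain ⟨hm1, hs1⟩ := key y1 i1 hi1 hu1 hc1
  obtain ⟨hm2, hs2⟩ := key y2 i2 hi2 hu2 hc2
  have hi12 : i1 = i2 := by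
    by_contra hne
    exact hs2 ((hu1 i2 (Ne.symm hne)).symm.trans (hc1 i2 hm2))
  subst hi12
  funext j
  by_cases hj : j = i1
  · subst hj
    have e1 : y1 j = !z j := by
      cases hy : y1 j <;> cases hzj : z j <;> simp_all
    have e2 : y2 j = !z j := by
      cases hy : y2 j <;> cases hzj : z j <;> simp_all
    rw [e1, e2]
  · rw [hu1 j hj, hu2 j hj]
end

section
/- Let f be a Boolean function on n variables with exactly k ≥ 1 zeros, and let Θ be its set of near-zero points, i.e. Θ = {y : f y = true and y is at Hamming distance 1 from some zero of f}. Then every DNF realization D of f satisfies |D| ≥ |Θ| / k. -/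
open scoped Classical

/-- If `f` has exactly `k ≥ 1` zeros and `Θ` is the set of near-zero points of
`f` (ones of `f` at Hamming distance 1 from some zero of `f`), then every DNF realization `D`
of `f` satisfies `|D| ≥ |Θ| / k`. -/
theorem stmt11 (n k : ℕ) (f : (Fin n → Bool) → Bool)
    (hk : 1 ≤ k) (hzeros : zerosCard f = k)
    (D : Finset (Conj n)) (hD : IsDNF f D) :
    ((Finset.univ.filter
        (fun y : Fin n → Bool =>
          f y = true ∧ ∃ z : Fin n → Bool, f z = false ∧ hammingDist y z = 1)).card : ℝ) / k ≤
      (D.card : ℝ) := by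
  set Θ := Finset.univ.filter
      (fun y : Fin n → Bool =>
        f y = true ∧ ∃ z : Fin n → Bool, f z = false ∧ hammingDist y z = 1) with hΘ
  set Z := Finset.univ.filter (fun x : Fin n → Bool => f x = false) with hZ
  -- key: an implicant conjunction cannot cover two distinct neighbors of a zero
  have key : ∀ K ∈ D, ∀ z : Fin n → Bool, f z = false →
      ∀ y₁ y₂ : Fin n → Bool, K.covers y₁ → K.covers y₂ →
      hammingDist y₁ z = 1 → hammingDist y₂ z = 1 → y₁ = y₂ := by
    intro K hK z hz y₁ y₂ h₁ h₂ d₁ d₂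
    have hImp : ∀ x, K.covers x → f x = true := fun x hx => (hD x).2 ⟨K, hK, hx⟩
    obtain ⟨i, hi⟩ := Finset.card_eq_one.mp d₁
    obtain ⟨j, hj⟩ := Finset.card_eq_one.mp d₂
    have hi' : ∀ m, y₁ m ≠ z m ↔ m = i := by
      intro m
      have := Finset.ext_iff.mp hi m
      simpa using this
    have hj' : ∀ m, y₂ m ≠ z m ↔ m = j := by
      intro m
      have := Finset.ext_iff.mp hj m
      simpa using this
    by_cases hij : i = j
    · subst hij
      funext m
      by_cases hm : m = i
      · subst hm
        have a1 := (hi' m).mpr rfl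
        have a2 := (hj' m).mpr rfl
        cases hzm : z m <;> cases h1 : y₁ m <;> cases h2 : y₂ m <;> simp_all
      · have a1 : y₁ m = z m := by
          by_contra h; exact hm ((hi' m).mp h)
        have a2 : y₂ m = z m := by
          by_contra h; exact hm ((hj' m).mp h)
        rw [a1, a2]
    · exfalso
      have hiK : i ∉ K.supp := by
        intro hiK
        have e1 : y₁ i = K.sgn i := h₁ i hiK
        have e2 : y₂ i = K.sgn i := h₂ i hiK
        have e3 : y₂ i = z i := by
          by_contra h; exact hij ((hj' i).mp h)
        exact (hi' i).mpr rfl (by rw [e1, ← e2, e3])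
      have hcov : K.covers z := by
        intro m hm
        have hmi : m ≠ i := fun h => hiK (h ▸ hm)
        have : y₁ m = z m := by
          by_contra h; exact hmi ((hi' m).mp h)
        rw [← this]; exact h₁ m hm
      rw [hImp z hcov] at hz; exact Bool.noConfusion hz
  -- build the injection Θ → D ×ˢ Z
  have hcard : Θ.card ≤ D.card * k := by
    have hchoice : ∀ y ∈ Θ, ∃ Kz : Conj n × (Fin n → Bool),
        Kz.1 ∈ D ∧ Kz.2 ∈ Z ∧ Kz.1.covers y ∧ hammingDist y Kz.2 = 1 := by
      intro y hy
      simp only [hΘ, Finset.mem_filter, Finset.mem_univ, true_and] at hy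
      obtain ⟨hfy, z, hz, hd⟩ := hy
      obtain ⟨K, hK, hKcov⟩ := (hD y).1 hfy
      exact ⟨⟨K, z⟩, hK, by simp [hZ, hz], hKcov, hd⟩
    choose g hg1 hg2 hg3 hg4 using hchoice
    have hinj : ∀ y₁ (h1 : y₁ ∈ Θ) y₂ (h2 : y₂ ∈ Θ), g y₁ h1 = g y₂ h2 → y₁ = y₂ := by
      intro y₁ h1 y₂ h2 heq
      have hz2 : f (g y₂ h2).2 = false := by
        have := hg2 y₂ h2
        simpa [hZ] using this
      refine key (g y₂ h2).1 (hg1 y₂ h2) (g y₂ h2).2 hz2 y₁ y₂ ?_ (hg3 y₂ h2) ?_ (hg4 y₂ h2)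
      · have := hg3 y₁ h1; rwa [heq] at this
      · have := hg4 y₁ h1; rwa [heq] at this
    have := Finset.card_le_card_of_injOn (f := fun y : Fin n → Bool =>
        if h : y ∈ Θ then g y h else (⟨⟨∅, fun _ => true⟩, y⟩ : Conj n × (Fin n → Bool)))
      (s := Θ) (t := D ×ˢ Z)
      (by intro y hy; simp only [dif_pos (Finset.mem_coe.mp hy)]
          exact Finset.mem_product.mpr ⟨hg1 y (Finset.mem_coe.mp hy), hg2 y (Finset.mem_coe.mp hy)⟩)
      (by intro y₁ h1 y₂ h2 heq
          simp only at heq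
          rw [dif_pos (Finset.mem_coe.mp h1), dif_pos (Finset.mem_coe.mp h2)] at heq
          exact hinj y₁ _ y₂ _ heq)
    calc Θ.card ≤ (D ×ˢ Z).card := this
      _ = D.card * Z.card := Finset.card_product _ _
      _ = D.card * k := by rw [show Z.card = k from hzeros]
  have hkpos : (0:ℝ) < k := by exact_mod_cast hk
  rw [div_le_iff₀ hkpos]
  calc (Θ.card : ℝ) ≤ (D.card * k : ℕ) := by exact_mod_cast hcard
    _ = (D.card : ℝ) * k := by push_cast; ring
end

section
/- For every ε > 0 and every sequence k = k(n) with 1 ≤ k(n) ≤ 2^{n/2}, almost all functions f in P_{k(n)}^n satisfy |Θ_f| ≥ (1 − ε)·n·k, where Θ_f = {y : f y = true and y is at Hamming distance 1 from some zero of f} is the set of near-zero points of f. -/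
open scoped Classical

open Finset

section Aux

/-! ### Auxiliary definitions -/

/-- The set of near-zero points of `f`. -/
noncomputable def Thset {n : ℕ} (f : (Fin n → Bool) → Bool) : Finset (Fin n → Bool) :=
  Finset.univ.filter (fun y => f y = true ∧ ∃ z, f z = false ∧ hammingDist y z = 1)

/-- Ordered pairs of distinct zeros of `f` at Hamming distance at most 2. -/
noncomputable def Tpairs {n : ℕ} (f : (Fin n → Bool) → Bool) :
    Finset ((Fin n → Bool) × (Fin n → Bool)) :=
  (Finset.univ ×ˢ Finset.univ).filter
    (fun p => f p.1 = false ∧ f p.2 = false ∧ p.1 ≠ p.2 ∧ hammingDist p.1 p.2 ≤ 2)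

/-- Isolated zeros: zeros with no other zero within distance 2. -/
noncomputable def IsoZeros {n : ℕ} (f : (Fin n → Bool) → Bool) : Finset (Fin n → Bool) :=
  Finset.univ.filter (fun z => f z = false ∧ ∀ z', z' ≠ z → hammingDist z z' ≤ 2 → f z' = true)

/-- Pairs of distinct points at distance at most 2. -/
noncomputable def Pairs2 (n : ℕ) : Finset ((Fin n → Bool) × (Fin n → Bool)) :=
  (Finset.univ ×ˢ Finset.univ).filter (fun p => p.1 ≠ p.2 ∧ hammingDist p.1 p.2 ≤ 2)

lemma update_dist (n : ℕ) (z : Fin n → Bool) (i : Fin n) :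
    hammingDist z (Function.update z i (!z i)) = 1 := by
  unfold hammingDist
  have h : (univ.filter (fun j => z j ≠ Function.update z i (!z i) j)) = {i} := by
    ext j
    simp only [mem_filter, mem_univ, true_and, mem_singleton, Function.update]
    rcases eq_or_ne j i with rfl | h
    · simp
    · simp [h]
  simp only [ne_eq] at h ⊢
  rw [h, card_singleton]

lemma sphere_card_ge (n : ℕ) (z : Fin n → Bool) :
    n ≤ (univ.filter (fun y => hammingDist z y = 1)).card := by
  classical
  have := Finset.card_le_card_of_injOn (f := fun i : Fin n => Function.update z i (!z i))
    (s := univ) (t := univ.filter (fun y => hammingDist z y = 1))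
    (by intro i _; simp only [Finset.mem_coe, mem_filter, mem_univ, true_and]; exact update_dist n z i)
    (by
      intro i _ j _ h
      by_contra hne
      have h1 := congrFun h i
      simp [Function.update, hne, (Ne.symm hne)] at h1)
  simpa using this

lemma iso_lb {n : ℕ} (f : (Fin n → Bool) → Bool) :
    n * (IsoZeros f).card ≤ (Thset f).card := by
  classical
  have hdisj : ∀ z1 ∈ IsoZeros f, ∀ z2 ∈ IsoZeros f, z1 ≠ z2 →
      Disjoint (univ.filter (fun y => hammingDist z1 y = 1))
               (univ.filter (fun y => hammingDist z2 y = 1)) := by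
    intro z1 h1 z2 h2 hne
    simp only [IsoZeros, mem_filter, mem_univ, true_and] at h1 h2
    rw [Finset.disjoint_left]
    intro y hy1 hy2
    simp only [mem_filter, mem_univ, true_and] at hy1 hy2
    have hd : hammingDist z1 z2 ≤ 2 := by
      calc hammingDist z1 z2 ≤ hammingDist z1 y + hammingDist y z2 := hammingDist_triangle _ _ _
      _ ≤ 2 := by rw [hy1, hammingDist_comm, hy2]
    have := h1.2 z2 (Ne.symm hne) hd
    rw [h2.1] at this; exact Bool.false_ne_true this
  have hsub : (IsoZeros f).biUnion (fun z => univ.filter (fun y => hammingDist z y = 1))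
      ⊆ Thset f := by
    intro y hy
    simp only [mem_biUnion] at hy
    obtain ⟨z, hz, hy⟩ := hy
    simp only [IsoZeros, mem_filter, mem_univ, true_and] at hz
    simp only [mem_filter, mem_univ, true_and] at hy
    have hyz : y ≠ z := by
      intro h; subst h; simp [hammingDist_self] at hy
    simp only [Thset, mem_filter, mem_univ, true_and]
    refine ⟨hz.2 y hyz (by omega), z, hz.1, by rwa [hammingDist_comm]⟩
  calc n * (IsoZeros f).card = ∑ z ∈ IsoZeros f, n := by
        rw [Finset.sum_const, smul_eq_mul, mul_comm]
    _ ≤ ∑ z ∈ IsoZeros f, (univ.filter (fun y => hammingDist z y = 1)).card :=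
        Finset.sum_le_sum (fun z _ => sphere_card_ge n z)
    _ = ((IsoZeros f).biUnion (fun z => univ.filter (fun y => hammingDist z y = 1))).card :=
        (Finset.card_biUnion hdisj).symm
    _ ≤ (Thset f).card := Finset.card_le_card hsub

lemma zeros_le {n : ℕ} (f : (Fin n → Bool) → Bool) :
    zerosCard f ≤ (IsoZeros f).card + (Tpairs f).card := by
  classical
  set Z := univ.filter (fun x : Fin n → Bool => f x = false) with hZ
  have hIsub : IsoZeros f ⊆ Z := by
    intro z hz; simp only [IsoZeros, mem_filter, mem_univ, true_and] at hz
    simp [hZ, hz.1]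
  have key : (Z \ IsoZeros f).card ≤ (Tpairs f).card := by
    have hwit : ∀ z ∈ Z \ IsoZeros f,
        ∃ z', f z = false ∧ f z' = false ∧ z ≠ z' ∧ hammingDist z z' ≤ 2 := by
      intro z hz
      simp only [mem_sdiff, hZ, mem_filter, mem_univ, true_and, IsoZeros, not_and,
        not_forall] at hz
      obtain ⟨hzf, hw⟩ := hz
      obtain ⟨z', h1, h2, h3⟩ := hw hzf
      refine ⟨z', hzf, ?_, Ne.symm h1, h2⟩
      cases hfz' : f z' with
      | false => rfl
      | true => exact absurd hfz' h3
    choose w hw using hwit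
    have := Finset.card_le_card_of_injOn
      (f := fun z => if h : z ∈ Z \ IsoZeros f then ((z, w z h) : _ × _) else (z, z))
      (s := Z \ IsoZeros f) (t := Tpairs f)
      (by
        intro z hz
        rw [Finset.mem_coe, Tpairs, mem_filter]
        simp only [dif_pos (Finset.mem_coe.mp hz)]
        obtain ⟨h1, h2, h3, h4⟩ := hw z hz
        simp only [Finset.mem_coe, Tpairs, mem_filter, mem_product, mem_univ, true_and]
        exact ⟨h1, h2, h3, h4⟩)
      (by
        intro a ha b hb h
        simp only [Finset.mem_coe] at ha hb
        simp only [dif_pos ha, dif_pos hb] at h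
        simpa using congrArg Prod.fst h)
    exact this
  calc zerosCard f = Z.card := rfl
    _ = (IsoZeros f).card + (Z \ IsoZeros f).card := by
        have h1 := Finset.card_sdiff_of_subset hIsub
        have h2 := Finset.card_le_card hIsub
        omega
    _ ≤ (IsoZeros f).card + (Tpairs f).card := by omega

lemma det_bound {n k : ℕ} (f : (Fin n → Bool) → Bool) (hf : zerosCard f = k) :
    n * k ≤ (Thset f).card + n * (Tpairs f).card := by
  have h1 := iso_lb f
  have h2 := zeros_le f
  rw [hf] at h2
  nlinarith [h1, h2]

lemma Pclass_card (n k : ℕ) : (Pclass n k).card = (2^n).choose k := by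
  classical
  have : (Pclass n k).card = (univ.powersetCard k : Finset (Finset (Fin n → Bool))).card := by
    apply Finset.card_nbij' (i := fun f => univ.filter (fun x => f x = false))
      (j := fun s => fun x => !decide (x ∈ s))
    · intro f hf
      rw [Finset.mem_coe, Pclass, mem_filter] at hf
      simp only [Finset.mem_coe, Pclass, mem_filter, mem_univ, true_and, zerosCard] at hf
      simp only [Finset.mem_coe, Finset.mem_powersetCard]
      exact ⟨Finset.subset_univ _, hf⟩
    · intro s hs
      simp only [Finset.mem_coe, Finset.mem_powersetCard] at hs
      rw [Finset.mem_coe, Pclass, mem_filter]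
      simp only [Finset.mem_coe, Pclass, mem_filter, mem_univ, true_and, zerosCard]
      rw [← hs.2]
      congr 1
      ext x
      simp
    · intro f hf
      funext x
      cases hx : f x <;> simp [hx]
    · intro s hs
      ext x
      simp
  rw [this, Finset.card_powersetCard]
  simp

lemma pair_count (n k : ℕ) (u v : Fin n → Bool) (huv : u ≠ v) :
    ((Pclass n k).filter (fun f => f u = false ∧ f v = false)).card
      ≤ (2^n - 2).choose (k - 2) := by
  classical
  have hcard : ((univ \ ({u, v} : Finset (Fin n → Bool))).powersetCard (k-2)).card
      = (2^n - 2).choose (k-2) := by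
    rw [Finset.card_powersetCard, Finset.card_sdiff_of_subset (Finset.subset_univ _)]
    congr 2
    · simp
    · simp [Finset.card_insert_of_notMem, huv]
  rw [← hcard]
  apply Finset.card_le_card_of_injOn
    (f := fun f => univ.filter (fun x => f x = false) \ {u, v})
  · intro f hf
    simp only [Finset.mem_coe, mem_filter] at hf
    obtain ⟨hfP, hu, hv⟩ := hf
    rw [Pclass, mem_filter] at hfP
    simp only [Finset.mem_coe, Pclass, mem_filter, mem_univ, true_and, zerosCard] at hfP
    simp only [Finset.mem_coe, Finset.mem_powersetCard]
    constructor
    · intro x hx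
      exact Finset.mem_sdiff.mpr ⟨mem_univ x, (Finset.mem_sdiff.mp hx).2⟩
    · have hsub : ({u, v} : Finset (Fin n → Bool)) ⊆ univ.filter (fun x => f x = false) := by
        intro x hx
        simp only [mem_insert, mem_singleton] at hx
        rcases hx with rfl | rfl <;> simp [hu, hv]
      rw [Finset.card_sdiff_of_subset hsub, hfP]
      congr 1
      simp [Finset.card_insert_of_notMem, huv]
  · intro f1 hf1 f2 hf2 h
    simp only [Finset.mem_coe, mem_filter] at hf1 hf2
    have hz : univ.filter (fun x => f1 x = false) = univ.filter (fun x => f2 x = false) := by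
      have e1 : ∀ (g : (Fin n → Bool) → Bool), g u = false → g v = false →
          univ.filter (fun x => g x = false)
            = (univ.filter (fun x => g x = false) \ {u, v}) ∪ {u, v} := by
        intro g hgu hgv
        ext x
        simp only [mem_union, mem_sdiff, mem_filter, mem_univ, true_and, mem_insert,
          mem_singleton]
        constructor
        · intro hx
          by_cases hx2 : x = u ∨ x = v
          · right; exact hx2
          · left; exact ⟨hx, by push_neg at hx2 ⊢; exact hx2⟩
        · rintro (⟨hx, _⟩ | (rfl | rfl)) <;> simp_all
      simp only at h
      rw [e1 f1 hf1.2.1 hf1.2.2, e1 f2 hf2.2.1 hf2.2.2, h]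
    funext x
    have : (f1 x = false) ↔ (f2 x = false) := by
      constructor <;> intro hx
      · have : x ∈ univ.filter (fun x => f2 x = false) := hz ▸ (by simp [hx])
        simpa using this
      · have : x ∈ univ.filter (fun x => f1 x = false) := hz.symm ▸ (by simp [hx])
        simpa using this
    cases h1 : f1 x <;> cases h2 : f2 x <;> simp_all

lemma ball2_card (n : ℕ) (u : Fin n → Bool) :
    (univ.filter (fun v => u ≠ v ∧ hammingDist u v ≤ 2)).card ≤ n^2 := by
  classical
  have step1 : (univ.filter (fun v => u ≠ v ∧ hammingDist u v ≤ 2)).card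
      ≤ ((univ.powersetCard 1 ∪ univ.powersetCard 2 : Finset (Finset (Fin n)))).card := by
    apply Finset.card_le_card_of_injOn (f := fun v => univ.filter (fun i => u i ≠ v i))
    · intro v hv
      simp only [Finset.mem_coe, mem_filter, mem_univ, true_and] at hv
      have hd : hammingDist u v = (univ.filter (fun i => u i ≠ v i)).card := rfl
      have h1 : 1 ≤ hammingDist u v := hammingDist_pos.mpr hv.1
      have h2 := hv.2
      simp only [Finset.mem_coe, Finset.mem_union, Finset.mem_powersetCard]
      have hor : hammingDist u v = 1 ∨ hammingDist u v = 2 := by omega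
      rcases hor with h | h
      · exact Or.inl ⟨Finset.subset_univ _, by rw [← hd]; exact h⟩
      · exact Or.inr ⟨Finset.subset_univ _, by rw [← hd]; exact h⟩
    · intro v1 hv1 v2 hv2 h
      simp only at h
      funext i
      have hi := Finset.ext_iff.mp h i
      simp only [mem_filter, mem_univ, true_and] at hi
      cases h1 : v1 i <;> cases h2 : v2 i <;> cases hu : u i <;> simp_all
  refine step1.trans ?_
  refine (Finset.card_union_le _ _).trans ?_
  rw [Finset.card_powersetCard, Finset.card_powersetCard, Finset.card_univ, Fintype.card_fin,
    Nat.choose_one_right, Nat.choose_two_right]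
  rcases Nat.eq_zero_or_pos n with rfl | hn
  · simp
  · obtain ⟨m, rfl⟩ := Nat.exists_eq_add_of_le hn
    have h1 : (1 + m) * ((1 + m) - 1) / 2 ≤ (1 + m) * m := by
      simp only [Nat.add_sub_cancel_left]
      exact Nat.div_le_self _ _
    nlinarith

lemma pairs2_card (n : ℕ) : (Pairs2 n).card ≤ 2^n * n^2 := by
  classical
  rw [Finset.card_eq_sum_card_fiberwise
    (f := Prod.fst) (t := (univ : Finset (Fin n → Bool))) (fun x _ => mem_univ _)]
  have hfib : ∀ u : Fin n → Bool,
      ((Pairs2 n).filter (fun p => p.1 = u)).card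
        ≤ (univ.filter (fun v => u ≠ v ∧ hammingDist u v ≤ 2)).card := by
    intro u
    apply Finset.card_le_card_of_injOn (f := Prod.snd)
    · intro p hp
      simp only [Finset.mem_coe, Pairs2, mem_filter, mem_product, mem_univ, true_and] at hp
      obtain ⟨⟨hne, hd⟩, h1⟩ := hp
      subst h1
      simp only [Finset.mem_coe, mem_filter, mem_univ, true_and]
      exact ⟨hne, hd⟩
    · intro p hp q hq h
      simp only [Finset.mem_coe, mem_filter] at hp hq
      exact Prod.ext (hp.2.trans hq.2.symm) h
  calc ∑ u : Fin n → Bool, ((Pairs2 n).filter (fun p => p.1 = u)).card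
      ≤ ∑ u : Fin n → Bool, n^2 := Finset.sum_le_sum (fun u _ => (hfib u).trans (ball2_card n u))
    _ = 2^n * n^2 := by simp [Finset.card_univ, mul_comm]

lemma sum_T_le (n k : ℕ) :
    ∑ f ∈ Pclass n k, (Tpairs f).card ≤ 2^n * n^2 * (2^n - 2).choose (k - 2) := by
  have hT : ∀ f : (Fin n → Bool) → Bool,
      Tpairs f = (Pairs2 n).filter (fun p => f p.1 = false ∧ f p.2 = false) := by
    intro f
    ext p
    simp only [Tpairs, Pairs2, mem_filter, mem_product, mem_univ, true_and]
    tauto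
  have h1 : ∑ f ∈ Pclass n k, (Tpairs f).card
      = ∑ f ∈ Pclass n k, ∑ p ∈ Pairs2 n,
          (if f p.1 = false ∧ f p.2 = false then 1 else 0) := by
    refine Finset.sum_congr rfl (fun f _ => ?_)
    rw [hT f, Finset.card_filter]
  have h2 : ∑ f ∈ Pclass n k, ∑ p ∈ Pairs2 n,
          (if f p.1 = false ∧ f p.2 = false then 1 else 0)
      = ∑ p ∈ Pairs2 n, ∑ f ∈ Pclass n k,
          (if f p.1 = false ∧ f p.2 = false then 1 else 0) := Finset.sum_comm
  have h3 : ∑ p ∈ Pairs2 n, ∑ f ∈ Pclass n k,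
          (if f p.1 = false ∧ f p.2 = false then 1 else 0)
      = ∑ p ∈ Pairs2 n,
          ((Pclass n k).filter (fun f => f p.1 = false ∧ f p.2 = false)).card := by
    refine Finset.sum_congr rfl (fun p _ => ?_)
    rw [Finset.card_filter]
  have h4 : ∑ p ∈ Pairs2 n,
          ((Pclass n k).filter (fun f => f p.1 = false ∧ f p.2 = false)).card
      ≤ ∑ p ∈ Pairs2 n, (2^n - 2).choose (k - 2) := by
    refine Finset.sum_le_sum (fun p hp => ?_)
    have hne : p.1 ≠ p.2 := by
      simp only [Pairs2, mem_filter, mem_product, mem_univ, true_and] at hp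
      exact hp.1
    exact pair_count n k p.1 p.2 hne
  have h5 : ∑ p ∈ Pairs2 n, (2^n - 2).choose (k - 2)
      = (Pairs2 n).card * (2^n - 2).choose (k - 2) := by
    rw [Finset.sum_const, smul_eq_mul]
  have h6 : (Pairs2 n).card * (2^n - 2).choose (k - 2)
      ≤ 2^n * n^2 * (2^n - 2).choose (k - 2) := Nat.mul_le_mul (pairs2_card n) le_rfl
  rw [h1, h2, h3]
  exact le_trans h4 (le_trans h5.le h6)

lemma choose_id (m k : ℕ) (hk : 2 ≤ k) (hkm : k ≤ m) :
    (m - 2).choose (k - 2) * (m * (m - 1)) = m.choose k * (k * (k - 1)) := by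
  obtain ⟨k', rfl⟩ := Nat.exists_eq_add_of_le hk
  obtain ⟨m', rfl⟩ := Nat.exists_eq_add_of_le hkm
  have hm : 2 + k' + m' - 2 = k' + m' := by omega
  have hm1 : 2 + k' + m' - 1 = 1 + k' + m' := by omega
  have hk2 : 2 + k' - 2 = k' := by omega
  have hk1 : 2 + k' - 1 = 1 + k' := by omega
  rw [hm, hm1, hk2, hk1]
  have h1 := Nat.add_one_mul_choose_eq (k' + m') k'
  have h2 := Nat.add_one_mul_choose_eq (k' + m' + 1) (k' + 1)
  have e1 : 2 + k' + m' = k' + m' + 1 + 1 := by omega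
  have e2 : 2 + k' = k' + 1 + 1 := by omega
  rw [e1, e2]
  nlinarith [h1, h2]

lemma markov_bound {α : Type*} (s : Finset α) (g : α → ℕ) (t : ℝ)
    (hall : ∀ a ∈ s, t < (g a : ℝ)) : (s.card : ℝ) * t ≤ ∑ a ∈ s, (g a : ℝ) := by
  calc (s.card : ℝ) * t = ∑ _a ∈ s, t := by rw [Finset.sum_const, nsmul_eq_mul]
    _ ≤ ∑ a ∈ s, (g a : ℝ) := Finset.sum_le_sum (fun a ha => (hall a ha).le)

lemma frac_eq (n k : ℕ) (P : ((Fin n → Bool) → Bool) → Prop) :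
    frac n k P = (((Pclass n k).filter P).card : ℝ) / ((Pclass n k).card : ℝ) := rfl

lemma frac_le (n k : ℕ) (P : ((Fin n → Bool) → Bool) → Prop) (c : ℝ) (hc : 0 ≤ c)
    (h : ∀ B : Finset ((Fin n → Bool) → Bool),
      (∀ f, f ∈ B ↔ f ∈ Pclass n k ∧ P f) → (B.card : ℝ) ≤ c * ((Pclass n k).card : ℝ)) :
    frac n k P ≤ c := by
  rw [frac_eq]
  rcases Nat.eq_zero_or_pos (Pclass n k).card with h0 | hpos
  · rw [h0]
    simpa using hc
  · rw [div_le_iff₀ (by exact_mod_cast hpos)]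
    exact h _ (fun f => Finset.mem_filter)

end Aux

lemma frac_bound (ε : ℝ) (hε : 0 < ε) (n kk : ℕ) (hn : 1 ≤ n) (hk1 : 1 ≤ kk)
    (hk2 : (kk : ℝ) ≤ 2 ^ ((n : ℝ) / 2)) :
    frac n kk (fun f =>
      ¬ ((1 - ε) * (n : ℝ) * (kk : ℝ) ≤
        ((Finset.univ.filter
            (fun y : Fin n → Bool =>
              f y = true ∧
                ∃ z : Fin n → Bool, f z = false ∧ hammingDist y z = 1)).card : ℝ)))
      ≤ 2 / ε * ((n : ℝ) ^ 2 * ((((2:ℝ) ^ ((1:ℝ)/2))⁻¹)) ^ n) := by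
  classical
  set s : ℝ := (2:ℝ) ^ ((1:ℝ)/2) with hs_def
  have hs0 : 0 < s := Real.rpow_pos_of_pos (by norm_num) _
  have hs1 : 1 < s := by
    rw [hs_def]
    rw [show (1:ℝ) = (2:ℝ) ^ (0:ℝ) by simp]
    exact Real.rpow_lt_rpow_of_exponent_lt (by norm_num) (by norm_num)
  have hs2 : s ^ 2 = 2 := by
    rw [hs_def, ← Real.rpow_natCast ((2:ℝ) ^ ((1:ℝ)/2)) 2, ← Real.rpow_mul (by norm_num)]
    norm_num
  have hsn : (2:ℝ) ^ ((n:ℝ) / 2) = s ^ n := by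
    rw [hs_def, ← Real.rpow_natCast ((2:ℝ) ^ ((1:ℝ)/2)) n, ← Real.rpow_mul (by norm_num)]
    congr 1
    ring
  have hsn1 : 1 ≤ s ^ n := by
    calc (1:ℝ) = 1 ^ n := (one_pow n).symm
    _ ≤ s ^ n := pow_le_pow_left₀ zero_le_one hs1.le n
  have hN : ((2^n : ℕ) : ℝ) = s ^ n * s ^ n := by
    push_cast
    rw [← hs2, ← pow_mul, two_mul, pow_add]
  have hkN : kk ≤ 2^n := by
    have : (kk : ℝ) ≤ ((2^n : ℕ) : ℝ) := by
      rw [hN]; rw [hsn] at hk2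
      nlinarith
    exact_mod_cast this
  set r : ℝ := s⁻¹ with hr
  apply frac_le _ _ _ _ (by positivity)
  intro B hBmem
  have hBT : ∀ f ∈ B, ε * kk < ((Tpairs f).card : ℝ) := by
    intro f hf
    obtain ⟨hfP, hbad⟩ := (hBmem f).mp hf
    push_neg at hbad
    have hzc : zerosCard f = kk := by
      rw [Pclass, mem_filter] at hfP; exact hfP.2
    have hdet := det_bound f hzc
    have hdet' : (n : ℝ) * kk ≤ (((Finset.univ.filter
            (fun y : Fin n → Bool =>
              f y = true ∧
                ∃ z : Fin n → Bool, f z = false ∧ hammingDist y z = 1)).card : ℝ))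
          + (n : ℝ) * ((Tpairs f).card : ℝ) := by
      exact_mod_cast hdet
    have hn' : (0:ℝ) < n := by exact_mod_cast hn
    have hk' : (0:ℝ) < kk := by exact_mod_cast hk1
    have step : (n:ℝ) * (ε * kk) < (n:ℝ) * ((Tpairs f).card : ℝ) := by nlinarith
    exact lt_of_mul_lt_mul_left step hn'.le
  rcases eq_or_lt_of_le hk1 with hk1' | hk2'
  · -- kk = 1 : B is empty
    have hBempty : B = ∅ := by
      rw [Finset.eq_empty_iff_forall_notMem]
      intro f hf
      have h1 := hBT f hf
      have hzc : zerosCard f = kk := by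
        have := ((hBmem f).mp hf).1
        rw [Pclass, mem_filter] at this; exact this.2
      have hTe : Tpairs f = ∅ := by
        rw [Finset.eq_empty_iff_forall_notMem]
        intro p hp
        simp only [Tpairs, mem_filter, mem_product, mem_univ, true_and] at hp
        obtain ⟨h1', h2', h3', _⟩ := hp
        have hsub : ({p.1, p.2} : Finset (Fin n → Bool)) ⊆ univ.filter (fun x => f x = false) := by
          intro x hx
          simp only [mem_insert, mem_singleton] at hx
          rcases hx with rfl | rfl <;> simp [h1', h2']
        have hc2 : ({p.1, p.2} : Finset (Fin n → Bool)).card = 2 := by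
          rw [Finset.card_insert_of_notMem (by simpa using h3'), Finset.card_singleton]
        have hle := Finset.card_le_card hsub
        rw [hc2] at hle
        have : 2 ≤ zerosCard f := hle
        omega
      rw [hTe] at h1
      simp only [Finset.card_empty, Nat.cast_zero] at h1
      have : (0:ℝ) < ε * kk := by positivity
      linarith
    rw [hBempty]
    simp only [Finset.card_empty, Nat.cast_zero]
    positivity
  · -- 2 ≤ kk
    have hkk2 : 2 ≤ kk := hk2'
    set N := 2^n with hNdef
    set C := N.choose kk with hC
    set C2 := (N - 2).choose (kk - 2) with hC2
    have hCpos : 0 < C := Nat.choose_pos hkN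
    have hBsub : B ⊆ Pclass n kk := fun f hf => ((hBmem f).mp hf).1
    have hMarkov : (B.card : ℝ) * (ε * kk) ≤ ((N * n^2 * C2 : ℕ) : ℝ) := by
      calc (B.card : ℝ) * (ε * kk) ≤ ∑ f ∈ B, ((Tpairs f).card : ℝ) := markov_bound B _ _ hBT
        _ ≤ ∑ f ∈ Pclass n kk, ((Tpairs f).card : ℝ) := by
            apply Finset.sum_le_sum_of_subset_of_nonneg hBsub
            intro i _ _
            positivity
        _ = ((∑ f ∈ Pclass n kk, (Tpairs f).card : ℕ) : ℝ) := by push_cast; ring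
        _ ≤ ((N * n^2 * C2 : ℕ) : ℝ) := by exact_mod_cast sum_T_le n kk
    have hNval : (N:ℝ) = s^n * s^n := by exact_mod_cast hN
    have hN2 : (2:ℝ) ≤ (N:ℝ) := by
      have h := pow_le_pow_right₀ hs1.le hn
      rw [pow_one] at h
      rw [hNval]; nlinarith [hs2, hs0]
    have hN1 : 1 ≤ N := by
      have : (0:ℝ) < (N:ℝ) := by rw [hNval]; positivity
      exact_mod_cast Nat.one_le_iff_ne_zero.mpr (by exact_mod_cast this.ne')
    have hid : (C2 : ℝ) * ((N:ℝ) * ((N:ℝ) - 1)) = (C : ℝ) * ((kk:ℝ) * ((kk:ℝ) - 1)) := by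
      have hnat := choose_id N kk hkk2 hkN
      have e1 : ((N:ℝ) - 1) = ((N - 1 : ℕ) : ℝ) := by
        rw [Nat.cast_sub hN1]; norm_num
      have e2 : ((kk:ℝ) - 1) = ((kk - 1 : ℕ) : ℝ) := by
        rw [Nat.cast_sub hk1]; norm_num
      rw [e1, e2]
      exact_mod_cast hnat
    have hrn : r ^ n * (s ^ n) = 1 := by
      rw [hr, inv_pow]
      field_simp
    have hrpos : 0 < r ^ n := by rw [hr]; positivity
    have hsn' : 0 < s ^ n := by positivity
    have hrN : r^n * (N:ℝ) = s^n := by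
      rw [hNval, ← mul_assoc, hrn, one_mul]
    have key : ((kk:ℝ) - 1) * (N:ℝ) ≤ 2 * r^n * ((N:ℝ) * ((N:ℝ) - 1)) := by
      have hNpos : (0:ℝ) < (N:ℝ) := by linarith
      have h1 : ((kk:ℝ) - 1) * (N:ℝ) ≤ s^n * (N:ℝ) := by
        rw [hsn] at hk2
        have : (kk:ℝ) - 1 ≤ s^n := by linarith
        exact mul_le_mul_of_nonneg_right this hNpos.le
      have h2 : (N:ℝ) ≤ 2 * ((N:ℝ) - 1) := by linarith
      have h3 : s^n * (N:ℝ) ≤ s^n * (2 * ((N:ℝ) - 1)) :=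
        mul_le_mul_of_nonneg_left h2 hsn'.le
      have h4 : 2 * r^n * ((N:ℝ) * ((N:ℝ) - 1)) = s^n * (2 * ((N:ℝ) - 1)) := by
        rw [show 2 * r^n * ((N:ℝ) * ((N:ℝ) - 1)) = (r^n * (N:ℝ)) * (2 * ((N:ℝ) - 1)) by ring,
          hrN]
      linarith
    have hε' : ε ≠ 0 := ne_of_gt hε
    have hkey2 : ((N * n^2 * C2 : ℕ) : ℝ) ≤ (2 / ε * ((n:ℝ)^2 * r^n) * C) * (ε * kk) := by
      have hNN1 : (0:ℝ) < (N:ℝ) * ((N:ℝ) - 1) := by nlinarith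
      have hCk : (0:ℝ) ≤ (C:ℝ) * kk := by positivity
      have main : (N:ℝ) * (C2:ℝ) ≤ 2 * r^n * (C:ℝ) * kk := by
        rw [← mul_le_mul_iff_of_pos_right hNN1]
        calc (N:ℝ) * (C2:ℝ) * ((N:ℝ) * ((N:ℝ) - 1))
            = (N:ℝ) * ((C2:ℝ) * ((N:ℝ) * ((N:ℝ) - 1))) := by ring
          _ = (N:ℝ) * ((C : ℝ) * ((kk:ℝ) * ((kk:ℝ) - 1))) := by rw [hid]
          _ = ((C:ℝ) * kk) * (((kk:ℝ) - 1) * (N:ℝ)) := by ring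
          _ ≤ ((C:ℝ) * kk) * (2 * r^n * ((N:ℝ) * ((N:ℝ) - 1))) :=
              mul_le_mul_of_nonneg_left key hCk
          _ = 2 * r^n * (C:ℝ) * (kk:ℝ) * ((N:ℝ) * ((N:ℝ) - 1)) := by ring
      have expand : (2 / ε * ((n:ℝ)^2 * r^n) * C) * (ε * kk)
          = (2 * r^n * (C:ℝ) * kk) * (n:ℝ)^2 := by
        have hcc : 2 / ε * ε = 2 := div_mul_cancel₀ 2 hε'
        calc (2 / ε * ((n:ℝ)^2 * r^n) * C) * (ε * kk)
            = (2 / ε * ε) * ((n:ℝ)^2 * r^n * C * kk) := by ring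
          _ = 2 * ((n:ℝ)^2 * r^n * C * kk) := by rw [hcc]
          _ = (2 * r^n * (C:ℝ) * kk) * (n:ℝ)^2 := by ring
      rw [expand]
      have h := mul_le_mul_of_nonneg_right main (sq_nonneg (n:ℝ))
      push_cast
      linarith [h]
    have hεk : (0:ℝ) < ε * kk := by
      have : (0:ℝ) < kk := by exact_mod_cast hk1
      positivity
    have hBle : (B.card : ℝ) ≤ 2 / ε * ((n:ℝ)^2 * r^n) * C := by
      have := le_trans hMarkov hkey2
      exact le_of_mul_le_mul_right this hεk
    have hPc : ((Pclass n kk).card : ℝ) = (C : ℝ) := by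
      rw [Pclass_card, hC, hNdef]
    rw [hPc]
    exact hBle

/-- For every `ε > 0` and every sequence `k(n)` with `1 ≤ k(n) ≤ 2^(n/2)`,
almost all functions `f ∈ P_{k(n)}^n` satisfy `|Θ_f| ≥ (1 − ε)·n·k`, where `Θ_f` is the set
of near-zero points of `f`. -/
theorem stmt13 (ε : ℝ) (hε : 0 < ε) (k : ℕ → ℕ)
    (hk1 : ∀ n, 1 ≤ k n) (hk2 : ∀ n, (k n : ℝ) ≤ 2 ^ ((n : ℝ) / 2)) :
    Filter.Tendsto
      (fun n =>
        frac n (k n) (fun f =>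
          ¬ ((1 - ε) * (n : ℝ) * (k n) ≤
            ((Finset.univ.filter
                (fun y : Fin n → Bool =>
                  f y = true ∧
                    ∃ z : Fin n → Bool, f z = false ∧ hammingDist y z = 1)).card : ℝ))))
      Filter.atTop (nhds 0) := by
  have hs1 : 1 < (2:ℝ) ^ ((1:ℝ)/2) := by
    rw [show (1:ℝ) = (2:ℝ) ^ (0:ℝ) by simp]
    exact Real.rpow_lt_rpow_of_exponent_lt (by norm_num) (by norm_num)
  have hr1 : |(((2:ℝ) ^ ((1:ℝ)/2))⁻¹)| < 1 := by
    rw [abs_of_pos (by positivity)]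
    exact inv_lt_one_of_one_lt₀ hs1
  apply squeeze_zero' (g := fun n : ℕ => 2 / ε * ((n : ℝ)^2 * ((((2:ℝ)^((1:ℝ)/2))⁻¹))^n))
  · exact Filter.Eventually.of_forall (fun n => by
      rw [frac_eq]
      positivity)
  · rw [Filter.eventually_atTop]
    exact ⟨1, fun n hn => frac_bound ε hε n (k n) hn (hk1 n) (hk2 n)⟩
  · have h := (tendsto_pow_const_mul_const_pow_of_abs_lt_one 2 hr1).const_mul (2/ε)
    simpa using h
end

section
/- Let n ≥ 1 and let f be the parity (linear) function on n variables, f x = true iff the number of coordinates i with x i = true is odd. Then every DNF realization of f has length at least 2^{n−1}, and moreover every conjunction belonging to a DNF realization of f has rank exactly n. -/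
open scoped Classical

/-- For the parity function `f` on `n ≥ 1` variables, every DNF realization of
`f` has length at least `2^(n−1)`, and every conjunction belonging to a DNF realization of
`f` has rank exactly `n`. -/
theorem stmt14 (n : ℕ) (hn : 1 ≤ n)
    (f : (Fin n → Bool) → Bool)
    (hf : ∀ x, f x = true ↔ Odd (Finset.univ.filter (fun i => x i = true)).card)
    (D : Finset (Conj n)) (hD : IsDNF f D) :
    2 ^ (n - 1) ≤ D.card ∧ ∀ K ∈ D, K.rank = n := by
  have flip : ∀ (x : Fin n → Bool) (i : Fin n),
      Odd ((Finset.univ.filter fun j => Function.update x i (!x i) j = true).card) ↔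
      ¬ Odd ((Finset.univ.filter fun j => x j = true).card) := by
    intro x i
    by_cases hxi : x i = true
    ·
      have hset : (Finset.univ.filter fun j => Function.update x i (!x i) j = true)
          = (Finset.univ.filter fun j => x j = true).erase i := by
        ext j
        by_cases hj : j = i
        · subst hj; simp [hxi]
        · simp [Function.update_of_ne hj, hj]
      have hi : i ∈ Finset.univ.filter fun j => x j = true := by simp [hxi]
      have hcard : (Finset.univ.filter fun j => x j = true).card
          = ((Finset.univ.filter fun j => x j = true).erase i).card + 1 :=
        (Finset.card_erase_add_one hi).symm
      rw [hset, hcard, Nat.odd_add_one, not_not]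
    · have hxi : x i = false := by simpa using hxi
      have hset : (Finset.univ.filter fun j => Function.update x i (!x i) j = true)
          = insert i (Finset.univ.filter fun j => x j = true) := by
        ext j
        by_cases hj : j = i
        · subst hj; simp [hxi]
        · simp [Function.update_of_ne hj, hj]
      have hi : i ∉ Finset.univ.filter fun j => x j = true := by simp [hxi]
      rw [hset, Finset.card_insert_of_notMem hi, Nat.odd_add_one]
  have hrank : ∀ K ∈ D, K.supp = Finset.univ := by
    intro K hK
    by_contra h
    obtain ⟨i, hi⟩ : ∃ i, i ∉ K.supp := by
      by_contra h'; push_neg at h'; exact h (Finset.eq_univ_iff_forall.mpr h')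
    set x := K.sgn with hx
    have hcov : K.covers x := fun j _ => rfl
    set y := Function.update x i (!x i) with hy
    have hcovy : K.covers y := by
      intro j hj
      have hne : j ≠ i := fun e => hi (e ▸ hj)
      simp [hy, Function.update_of_ne hne, hx]
    have hfx := (hf x).mp ((hD x).mpr ⟨K, hK, hcov⟩)
    have hfy := (hf y).mp ((hD y).mpr ⟨K, hK, hcovy⟩)
    exact (flip x i).mp hfy hfx
  refine ⟨?_, fun K hK => by
    simp [Conj.rank, hrank K hK]⟩
  -- count odd points
  set O : Finset (Fin n → Bool) :=
    Finset.univ.filter (fun x => Odd (Finset.univ.filter (fun i => x i = true)).card) with hO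
  set E : Finset (Fin n → Bool) :=
    Finset.univ.filter (fun x => ¬ Odd (Finset.univ.filter (fun i => x i = true)).card) with hE
  have i0 : Fin n := ⟨0, hn⟩
  have hOE : O.card = E.card := by
    apply Finset.card_bij' (fun x _ => Function.update x i0 (!x i0))
      (fun x _ => Function.update x i0 (!x i0))
    case hi =>
      intro x hx
      simp only [hO, Finset.mem_filter, Finset.mem_univ, true_and] at hx
      simp only [hE, Finset.mem_filter, Finset.mem_univ, true_and]
      rw [flip x i0]
      exact not_not_intro hx
    case hj =>
      intro x hx
      simp only [hE, Finset.mem_filter, Finset.mem_univ, true_and] at hx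
      simp only [hO, Finset.mem_filter, Finset.mem_univ, true_and]
      exact (flip x i0).mpr hx
    case left_inv =>
      intro x _
      simp [Function.update_idem, Function.update_eq_self]
    case right_inv =>
      intro x _
      simp [Function.update_idem, Function.update_eq_self]
  have hsum : O.card + E.card = 2 ^ n := by
    rw [hO, hE, Finset.card_filter_add_card_filter_not, Finset.card_univ]
    simp [Fintype.card_fun]
  have hOcard : O.card = 2 ^ (n - 1) := by
    have h2 : 2 * O.card = 2 ^ n := by omega
    have hpow : 2 ^ n = 2 * 2 ^ (n - 1) := by
      conv_lhs => rw [show n = (n - 1) + 1 by omega]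
      ring
    omega
  -- injection from O into D
  have hinj : O.card ≤ D.card := by
    have hchoice : ∀ x ∈ O, ∃ K ∈ D, K.covers x := by
      intro x hx
      simp only [hO, Finset.mem_filter, Finset.mem_univ, true_and] at hx
      exact (hD x).mp ((hf x).mpr hx)
    choose g hg1 hg2 using hchoice
    apply Finset.card_le_card_of_injOn (fun x => if hx : x ∈ O then g x hx else (⟨∅, fun _ => false⟩ : Conj n))
    · intro x hx
      simp only [Finset.mem_coe] at hx
      simp only [hx, dif_pos, Finset.mem_coe]
      exact hg1 x hx
    · intro x hx y hy hxy
      simp only [Finset.mem_coe] at hx hy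
      simp only [hx, hy, dif_pos] at hxy
      have hcx := hg2 x hx
      have hcy := hg2 y hy
      rw [hxy] at hcx
      have hsupp := hrank _ (hg1 y hy)
      funext i
      have h1 := hcx i (hsupp ▸ Finset.mem_univ i)
      have h2 := hcy i (hsupp ▸ Finset.mem_univ i)
      rw [h1, h2]
  omega
end
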